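/- arXiv:2303.18033 — 6 statements merged into one kernel-verified Lean document; each statement's English description precedes it below -/
import Mathlib

section
/- Let C ⊆ ℝⁿ be a cone and f : C → ℝ a convex function that is positively homogeneous of degree m ≥ 1 (i.e., f(λx) = λ^m f(x) for all x ∈ C \ {0} and λ ≥ 0) and nonnegative. Then f is (1/m)-convex, i.e., f^(1/m) is convex on C. -/
set_option maxHeartbeats 1000000 in
theorem stmt0 (n m : ℕ) (hm : 1 ≤ m)
    (C : Set (EuclideanSpace ℝ (Fin n)))
    (hcone : ∀ x ∈ C, ∀ c : ℝ, 0 ≤ c → c • x ∈ C)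
    (f : EuclideanSpace ℝ (Fin n) → ℝ)
    (hconv : ConvexOn ℝ C f)
    (hnonneg : ∀ x ∈ C, 0 ≤ f x)
    (hhom : ∀ x ∈ C, x ≠ 0 → ∀ c : ℝ, 0 ≤ c → f (c • x) = c ^ m * f x) :
    ConvexOn ℝ C (fun x => f x ^ ((1 : ℝ) / m)) := by
  have hm0 : m ≠ 0 := by omega
  have hmR : (m : ℝ) ≠ 0 := Nat.cast_ne_zero.mpr hm0
  refine ⟨hconv.1, ?_⟩
  intro x hx y hy a b ha hb hab
  simp only [smul_eq_mul]
  set u : ℝ := f x ^ ((1:ℝ)/m) with hu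
  set v : ℝ := f y ^ ((1:ℝ)/m) with hv
  have hu0 : 0 ≤ u := Real.rpow_nonneg (hnonneg x hx) _
  have hv0 : 0 ≤ v := Real.rpow_nonneg (hnonneg y hy) _
  have hupow : u ^ m = f x := by
    rw [hu, one_div, Real.rpow_inv_natCast_pow (hnonneg x hx) hm0]
  have hvpow : v ^ m = f y := by
    rw [hv, one_div, Real.rpow_inv_natCast_pow (hnonneg y hy) hm0]
  rcases eq_or_lt_of_le ha with ha0 | ha
  · -- a = 0, b = 1
    have hb1 : b = 1 := by linarith
    rw [← ha0, hb1, zero_smul, one_smul, zero_add, zero_mul, one_mul, zero_add]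
  rcases eq_or_lt_of_le hb with hb0 | hb
  · have ha1 : a = 1 := by linarith
    rw [← hb0, ha1, zero_smul, one_smul, add_zero, zero_mul, one_mul, add_zero]
  rcases eq_or_ne x 0 with hx0 | hx0
  · -- x = 0
    rw [hx0, smul_zero, zero_add]
    rcases eq_or_ne y 0 with hy0 | hy0
    · rw [hy0, smul_zero]
      have h1 : b • (0:EuclideanSpace ℝ (Fin n)) = (0:EuclideanSpace ℝ (Fin n)) :=
        smul_zero b
      have h2 : u = v := by rw [hu, hv, hx0, hy0]
      have : f (0:EuclideanSpace ℝ (Fin n)) ^ ((1:ℝ)/m) = v := by rw [hv, hy0]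
      rw [this]
      nlinarith
    · rw [hhom y hy hy0 b hb.le]
      have hbv : (b ^ m * f y) ^ ((1:ℝ)/m) = b * v := by
        rw [Real.mul_rpow (by positivity) (hnonneg y hy), hv, one_div,
          ← Real.rpow_natCast b m, ← Real.rpow_mul hb.le,
          mul_inv_cancel₀ hmR, Real.rpow_one]
      rw [hbv]
      nlinarith
  rcases eq_or_ne y 0 with hy0 | hy0
  · rw [hy0, smul_zero, add_zero]
    rw [hhom x hx hx0 a ha.le]
    have hau : (a ^ m * f x) ^ ((1:ℝ)/m) = a * u := by
      rw [Real.mul_rpow (by positivity) (hnonneg x hx), hu, one_div,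
        ← Real.rpow_natCast a m, ← Real.rpow_mul ha.le,
        mul_inv_cancel₀ hmR, Real.rpow_one]
    rw [hau]
    nlinarith
  -- now a > 0, b > 0, x ≠ 0, y ≠ 0
  set z := a • x + b • y with hz
  have hzC : z ∈ C := hconv.1 hx hy ha.le hb.le hab
  rcases eq_or_ne z 0 with hz0 | hz0
  · -- degenerate: f 0 = 0
    have hf0 : f z ≤ 0 := by
      have key : ∀ c : ℝ, 0 < c → c ≤ 1 → f z ≤ c * (a * f x + b * f y) := by
        intro c hc hc1
        have hcx : c • x ∈ C := hcone x hx c hc.le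
        have hcy : c • y ∈ C := hcone y hy c hc.le
        have hcomb : a • (c • x) + b • (c • y) = z := by
          rw [smul_comm a c, smul_comm b c, ← smul_add, ← hz, hz0, smul_zero]
        have hle := hconv.2 hcx hcy ha.le hb.le hab
        rw [hcomb] at hle
        simp only [smul_eq_mul] at hle
        rw [hhom x hx hx0 c hc.le, hhom y hy hy0 c hc.le] at hle
        have h1 : c ^ m ≤ c := by
          calc c ^ m ≤ c ^ 1 := pow_le_pow_of_le_one hc.le hc1 hm
            _ = c := pow_one c
        have h2 : 0 ≤ a * f x + b * f y := by
          have := hnonneg x hx; have := hnonneg y hy; positivity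
        nlinarith
      have hfz0 : f z = 0 := by
        refine le_antisymm ?_ (hnonneg z hzC)
        refine le_of_forall_pos_le_add fun ε hε => ?_
        set M := a * f x + b * f y with hM
        have hM0 : 0 ≤ M := by
          have := hnonneg x hx; have := hnonneg y hy; positivity
        rcases le_or_gt M ε with h | h
        · have := key 1 one_pos le_rfl
          rw [one_mul] at this
          linarith
        · have hMpos : 0 < M := lt_of_le_of_lt hε.le h
          have hc : (0:ℝ) < ε / M := by positivity
          have hc1 : ε / M ≤ 1 := by rw [div_le_one hMpos]; linarith
          have := key (ε/M) hc hc1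
          rw [div_mul_cancel₀ _ (ne_of_gt hMpos)] at this
          linarith
      rw [hfz0]
    have hfz : f z = 0 := le_antisymm hf0 (hnonneg z hzC)
    rw [hfz, Real.zero_rpow (by positivity)]
    positivity
  · -- main case: ε argument
    have key : ∀ ε : ℝ, 0 < ε → f z ^ ((1:ℝ)/m) ≤ a * u + b * v + ε := by
      intro ε hε
      set s := u + ε with hs
      set t := v + ε with ht
      have hs0 : 0 < s := by positivity
      have ht0 : 0 < t := by positivity
      set D := a * s + b * t with hD
      have hD0 : 0 < D := by positivity
      have hx'C : s⁻¹ • x ∈ C := hcone x hx _ (by positivity)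
      have hy'C : t⁻¹ • y ∈ C := hcone y hy _ (by positivity)
      have hfx' : f (s⁻¹ • x) ≤ 1 := by
        rw [hhom x hx hx0 s⁻¹ (by positivity), ← hupow, ← mul_pow]
        have h : s⁻¹ * u ≤ 1 := by
          rw [inv_mul_le_iff₀ hs0, mul_one]; linarith
        exact pow_le_one₀ (by positivity) h
      have hfy' : f (t⁻¹ • y) ≤ 1 := by
        rw [hhom y hy hy0 t⁻¹ (by positivity), ← hvpow, ← mul_pow]
        have h : t⁻¹ * v ≤ 1 := by
          rw [inv_mul_le_iff₀ ht0, mul_one]; linarith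
        exact pow_le_one₀ (by positivity) h
      have hsum : a * s / D + b * t / D = 1 := by field_simp; linarith [hD]
      have hcomb := hconv.2 hx'C hy'C
        (by positivity : (0:ℝ) ≤ a * s / D) (by positivity : (0:ℝ) ≤ b * t / D) hsum
      have e1 : a * s / D * s⁻¹ = D⁻¹ * a := by field_simp
      have e2 : b * t / D * t⁻¹ = D⁻¹ * b := by field_simp
      have heq : (a * s / D) • (s⁻¹ • x) + (b * t / D) • (t⁻¹ • y) = D⁻¹ • z := by
        rw [smul_smul, smul_smul, e1, e2, hz, smul_add, smul_smul, smul_smul]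
      rw [heq] at hcomb
      simp only [smul_eq_mul] at hcomb
      have hfw : f (D⁻¹ • z) ≤ 1 := by
        calc f (D⁻¹ • z) ≤ (a * s / D) * f (s⁻¹ • x) + (b * t / D) * f (t⁻¹ • y) := hcomb
          _ ≤ (a * s / D) * 1 + (b * t / D) * 1 := by gcongr <;> positivity
          _ = 1 := by rw [mul_one, mul_one, hsum]
      have hwC : D⁻¹ • z ∈ C := hcone z hzC _ (by positivity)
      have hwne : D⁻¹ • z ≠ 0 := smul_ne_zero (by positivity) hz0
      have hfz : f z ≤ D ^ m := by
        have hh := hhom _ hwC hwne D hD0.le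
        rw [smul_smul, mul_inv_cancel₀ (ne_of_gt hD0), one_smul] at hh
        calc f z = D ^ m * f (D⁻¹ • z) := hh
          _ ≤ D ^ m * 1 := by
              have : (0:ℝ) ≤ D ^ m := by positivity
              nlinarith
          _ = D ^ m := mul_one _
      calc f z ^ ((1:ℝ)/m) ≤ (D ^ m) ^ ((1:ℝ)/m) :=
            Real.rpow_le_rpow (hnonneg z hzC) hfz (by positivity)
        _ = D := by rw [one_div, Real.pow_rpow_inv_natCast hD0.le hm0]
        _ = a * u + b * v + ε := by rw [hD, hs, ht]; nlinarith
    exact le_of_forall_pos_le_add key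
end

section
/- Let C ⊆ ℝⁿ be a relatively open convex set and (f_i) a sequence of convex functions C → ℝ. Let X ⊆ C be dense in C. If (f_i) converges pointwise on X, then (f_i) converges pointwise on all of C to a convex function f : C → ℝ, and the convergence is uniform on each compact subset of C. -/
open Filter Metric Set
open scoped Topology NNReal

lemma opnorm_mul_le_of_forall {E : Type*} [NormedAddCommGroup E] [NormedSpace ℝ E]
    (φ : E →L[ℝ] ℝ) {δ c : ℝ} (hδ : 0 ≤ δ) (h : ∀ v : E, ‖v‖ ≤ δ → φ v ≤ c) :
    ‖φ‖ * δ ≤ c := by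
  have hc0 : 0 ≤ c := by simpa using h 0 (by simpa)
  rcases eq_or_lt_of_le hδ with h0 | hδpos
  · simpa [← h0] using hc0
  have habs : ∀ v : E, ‖v‖ ≤ δ → |φ v| ≤ c := by
    intro v hv
    rw [abs_le]
    refine ⟨?_, h v hv⟩
    have := h (-v) (by simpa using hv)
    simp only [map_neg] at this
    linarith
  have hb : ‖φ‖ ≤ c / δ := by
    refine φ.opNorm_le_bound (by positivity) ?_
    intro w
    rcases eq_or_ne w 0 with rfl | hw
    · simp
    have hwn : 0 < ‖w‖ := norm_pos_iff.2 hw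
    have := habs ((δ / ‖w‖) • w) (by
      rw [norm_smul, Real.norm_eq_abs, abs_of_pos (by positivity)]
      field_simp; norm_num)
    rw [map_smul, smul_eq_mul, abs_mul, abs_of_pos (by positivity)] at this
    rw [Real.norm_eq_abs]
    rw [div_mul_eq_mul_div, le_div_iff₀ hδpos]
    calc |φ w| * δ = ‖w‖ * (δ / ‖w‖ * |φ w|) := by field_simp
    _ ≤ ‖w‖ * c := by nlinarith [this, hwn.le]
    _ = c * ‖w‖ := mul_comm _ _
  calc ‖φ‖ * δ ≤ (c / δ) * δ := by nlinarith
  _ = c := by field_simp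

lemma hull_perturb {E : Type*} [NormedAddCommGroup E] [NormedSpace ℝ E]
    {ι : Type*} [Fintype ι] [Nonempty ι] {p q : ι → E} {x : E} {δ ε : ℝ}
    (hε : 0 ≤ ε)
    (hδ : closedBall x δ ⊆ convexHull ℝ (Set.range p))
    (hq : ∀ j, ‖q j - p j‖ ≤ ε) :
    closedBall x (δ - ε) ⊆ convexHull ℝ (Set.range q) := by
  intro y hy
  by_contra hy'
  have hδε : ε ≤ δ := by
    have := mem_closedBall.1 hy
    have : 0 ≤ δ - ε := le_trans dist_nonneg this
    linarith
  obtain ⟨φ, u, hφq, hφy⟩ := geometric_hahn_banach_closed_point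
    (convex_convexHull ℝ _) ((Set.finite_range q).isClosed_convexHull ℝ) hy'
  -- every point of range p satisfies φ < u + ‖φ‖ε
  have hp : ∀ j, φ (p j) < u + ‖φ‖ * ε := by
    intro j
    have h1 : φ (q j) < u := hφq _ (subset_convexHull ℝ _ (mem_range_self j))
    have h2 : φ (p j) - φ (q j) ≤ ‖φ‖ * ε := by
      have := φ.le_opNorm (p j - q j)
      rw [map_sub] at this
      calc φ (p j) - φ (q j) ≤ ‖φ (p j) - φ (q j)‖ := le_abs_self _
      _ ≤ ‖φ‖ * ‖p j - q j‖ := this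
      _ ≤ ‖φ‖ * ε := by nlinarith [norm_nonneg φ, hq j, norm_sub_rev (p j) (q j)]
    linarith
  have hhull : ∀ a ∈ convexHull ℝ (Set.range p), φ a < u + ‖φ‖ * ε := by
    intro a ha
    have : convexHull ℝ (Set.range p) ⊆ {z | φ z < u + ‖φ‖ * ε} := by
      apply convexHull_min
      · rintro _ ⟨j, rfl⟩; exact hp j
      · exact convex_halfSpace_lt ⟨fun a b => by simp, fun c a => by simp⟩ _
    exact this ha
  -- bound on the ball
  have hball : ∀ v : E, ‖v‖ ≤ δ → φ v ≤ u + ‖φ‖ * ε - φ x := by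
    intro v hv
    have : x + v ∈ closedBall x δ := by
      simpa [dist_eq_norm] using hv
    have := hhull _ (hδ this)
    rw [map_add] at this
    linarith
  have key : ‖φ‖ * δ ≤ u + ‖φ‖ * ε - φ x := opnorm_mul_le_of_forall φ (le_trans hε hδε) hball
  have hyx : φ y - φ x ≤ ‖φ‖ * (δ - ε) := by
    have := φ.le_opNorm (y - x)
    rw [map_sub] at this
    calc φ y - φ x ≤ ‖φ y - φ x‖ := le_abs_self _
    _ ≤ ‖φ‖ * ‖y - x‖ := this
    _ ≤ ‖φ‖ * (δ - ε) := by
        have hle : ‖y - x‖ ≤ δ - ε := by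
          have := mem_closedBall.1 hy; rwa [dist_eq_norm] at this
        nlinarith [norm_nonneg φ]
  nlinarith

lemma local_control {E : Type*} [NormedAddCommGroup E] [NormedSpace ℝ E] [FiniteDimensional ℝ E]
    {C X : Set E} (hC : Convex ℝ C) (hopen : IsOpen C) (hX : X ⊆ C) (hdense : C ⊆ closure X)
    {f : ℕ → E → ℝ} (hconv : ∀ i, ConvexOn ℝ C (f i))
    (hlim : ∀ x ∈ X, ∃ L : ℝ, Tendsto (fun i => f i x) atTop (nhds L))
    {x : E} (hx : x ∈ C) :
    ∃ ρ > 0, ∃ M : ℝ, ball x ρ ⊆ C ∧ ∀ i, ∀ y ∈ ball x ρ, |f i y| ≤ M := by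
  obtain ⟨δ0, hδ0, hball0⟩ := Metric.isOpen_iff.1 hopen x hx
  obtain ⟨b, hxb, hbs⟩ := exists_mem_interior_convexHull_affineBasis
    (isOpen_ball.mem_nhds (mem_ball_self hδ0) : ball x δ0 ∈ 𝓝 x)
  obtain ⟨δ1, hδ1, hball1⟩ := Metric.isOpen_iff.1 isOpen_interior x hxb
  set δ := min δ1 δ0 / 2 with hδdef
  have hδ : 0 < δ := by positivity
  have hδδ0 : δ ≤ δ0 := by
    have := min_le_right δ1 δ0; simp only [hδdef]; linarith
  have hballhull : closedBall x δ ⊆ convexHull ℝ (Set.range b) := by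
    refine subset_trans ?_ (interior_subset)
    refine subset_trans ?_ hball1
    refine closedBall_subset_ball ?_
    have := min_le_left δ1 δ0; simp only [hδdef]; linarith
  -- choose points of X near the affine basis points
  have hq : ∀ j : Fin (Module.finrank ℝ E + 1), ∃ z ∈ X, dist (b j) z < δ / 2 := by
    intro j
    have hbj : (b j : E) ∈ C := hball0 (hbs (subset_convexHull ℝ _ (mem_range_self j)))
    exact Metric.mem_closure_iff.1 (hdense hbj) _ (by positivity)
  choose q hqX hqd using hq
  have hqC : Set.range q ⊆ C := by rintro _ ⟨j, rfl⟩; exact hX (hqX j)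
  have hhullq : closedBall x (δ - δ/2) ⊆ convexHull ℝ (Set.range q) :=
    hull_perturb (by positivity) hballhull
      (fun j => by
        have := hqd j
        rw [dist_eq_norm] at this
        calc ‖q j - b j‖ = ‖b j - q j‖ := norm_sub_rev _ _
        _ ≤ δ / 2 := this.le)
  have hhullqC : convexHull ℝ (Set.range q) ⊆ C := convexHull_min hqC hC
  -- uniform bound at the vertices
  have hB : ∀ j, ∃ B : ℝ, ∀ i, |f i (q j)| ≤ B := by
    intro j
    obtain ⟨L, hL⟩ := hlim _ (hqX j)
    obtain ⟨B, hB⟩ := (hL.abs.bddAbove_range)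
    exact ⟨B, fun i => hB (mem_range_self i)⟩
  choose B hBB using hB
  obtain ⟨M1, hM1⟩ : ∃ M1 : ℝ, ∀ j i, |f i (q j)| ≤ M1 := by
    refine ⟨Finset.univ.sup' ⟨0, Finset.mem_univ 0⟩ B, fun j i => ?_⟩
    exact le_trans (hBB j i) (Finset.le_sup' B (Finset.mem_univ j))
  have hupper : ∀ i, ∀ y ∈ convexHull ℝ (Set.range q), f i y ≤ M1 := by
    intro i y hy
    obtain ⟨z, ⟨j, rfl⟩, hz⟩ := (hconv i).exists_ge_of_mem_convexHull hqC hy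
    exact le_trans hz (le_trans (le_abs_self _) (hM1 j i))
  -- a point of X near x
  obtain ⟨p, hpX, hpd⟩ := Metric.mem_closure_iff.1 (hdense hx) (δ/8) (by positivity)
  obtain ⟨B0, hB0⟩ : ∃ B0 : ℝ, ∀ i, |f i p| ≤ B0 := by
    obtain ⟨L, hL⟩ := hlim _ hpX
    obtain ⟨B, hB⟩ := (hL.abs.bddAbove_range)
    exact ⟨B, fun i => hB (mem_range_self i)⟩
  have hB0nn : 0 ≤ B0 := le_trans (abs_nonneg _) (hB0 0)
  refine ⟨δ/8, by positivity, 2*B0 + |M1|, ?_, ?_⟩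
  · exact subset_trans (ball_subset_ball (by linarith)) hball0
  · intro i y hy
    have hyd : dist y x < δ/8 := mem_ball.1 hy
    have hyhull : y ∈ convexHull ℝ (Set.range q) := by
      apply hhullq
      rw [mem_closedBall]
      linarith
    have hyC : y ∈ C := hhullqC hyhull
    have hupy : f i y ≤ M1 := hupper i y hyhull
    -- lower bound via reflection through p
    set z : E := p + (p - y) with hz
    have hzx : dist z x ≤ δ/2 := by
      have h1 : dist z x ≤ dist z p + dist p x := dist_triangle _ _ _
      have h2 : dist z p = dist p y := by
        rw [dist_eq_norm, dist_eq_norm]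
        simp only [hz]
        rw [show p + (p - y) - p = p - y by abel]
      have h3 : dist p y ≤ dist p x + dist x y := dist_triangle _ _ _
      rw [dist_comm x p] at hpd
      rw [dist_comm y x] at hyd
      linarith
    have hzhull : z ∈ convexHull ℝ (Set.range q) := hhullq (by rw [mem_closedBall]; linarith)
    have hzC : z ∈ C := hhullqC hzhull
    have hmid : ((1:ℝ)/2) • y + ((1:ℝ)/2) • z = p := by
      simp only [hz]; module
    have hcvx := (hconv i).2 hyC hzC (by norm_num) (by norm_num) (by norm_num : (1:ℝ)/2 + 1/2 = 1)
    rw [hmid] at hcvx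
    simp only [smul_eq_mul] at hcvx
    have hlow : 2 * f i p - f i z ≤ f i y := by linarith
    have hfz : f i z ≤ M1 := hupper i z hzhull
    have h1 : -(2*B0 + |M1|) ≤ f i y := by
      have := abs_le.1 (hB0 i)
      have : -B0 ≤ f i p := this.1
      have hM1abs : M1 ≤ |M1| := le_abs_self _
      linarith
    have h2 : f i y ≤ 2*B0 + |M1| := le_trans hupy (by
      have := le_abs_self M1; linarith)
    exact abs_le.2 ⟨h1, h2⟩

lemma local_lip {E : Type*} [NormedAddCommGroup E] [NormedSpace ℝ E] [FiniteDimensional ℝ E]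
    {C X : Set E} (hC : Convex ℝ C) (hopen : IsOpen C) (hX : X ⊆ C) (hdense : C ⊆ closure X)
    {f : ℕ → E → ℝ} (hconv : ∀ i, ConvexOn ℝ C (f i))
    (hlim : ∀ x ∈ X, ∃ L : ℝ, Tendsto (fun i => f i x) atTop (nhds L))
    {x : E} (hx : x ∈ C) :
    ∃ ρ : ℝ, ∃ K : ℝ≥0, 0 < ρ ∧ ball x ρ ⊆ C ∧
      ∀ i, LipschitzOnWith K (f i) (ball x ρ) := by
  obtain ⟨ρ, hρ, M, hsub, hM⟩ := local_control hC hopen hX hdense hconv hlim hx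
  refine ⟨ρ/2, (2*M/(ρ/2)).toNNReal, by positivity, subset_trans (ball_subset_ball (by linarith)) hsub, fun i => ?_⟩
  have hf : ConvexOn ℝ (ball x ρ) (f i) := (hconv i).subset hsub (convex_ball x ρ)
  have := hf.lipschitzOnWith_of_abs_le (M := M) (by positivity : (0:ℝ) < ρ/2)
    (fun a ha => hM i a (mem_ball.2 ha))
  simpa [show ρ - ρ/2 = ρ/2 by ring] using this

lemma core {E : Type*} [NormedAddCommGroup E] [NormedSpace ℝ E] [FiniteDimensional ℝ E]
    {C X : Set E} (hC : Convex ℝ C) (hopen : IsOpen C) (hX : X ⊆ C) (hdense : C ⊆ closure X)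
    {f : ℕ → E → ℝ} (hconv : ∀ i, ConvexOn ℝ C (f i))
    (hlim : ∀ x ∈ X, ∃ L : ℝ, Tendsto (fun i => f i x) atTop (nhds L)) :
    ∃ g : E → ℝ, ConvexOn ℝ C g ∧
      (∀ x ∈ C, Tendsto (fun i => f i x) atTop (nhds (g x))) ∧
      ∀ K ⊆ C, IsCompact K → TendstoUniformlyOn f g atTop K := by
  have hlip := fun x (hx : x ∈ C) => local_lip hC hopen hX hdense hconv hlim hx
  choose! ρ KK hρpos hsub hlipK using hlip
  -- pointwise convergence everywhere
  have hcauchy : ∀ x ∈ C, ∃ L : ℝ, Tendsto (fun i => f i x) atTop (nhds L) := by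
    intro x hx
    apply cauchySeq_tendsto_of_complete
    rw [Metric.cauchySeq_iff]
    intro ε hε
    set r := min (ρ x) (ε/(3*((KK x : ℝ) + 1))) with hr
    have hKpos : (0:ℝ) < (KK x : ℝ) + 1 := by positivity
    have hrpos : 0 < r := lt_min (hρpos x hx) (by positivity)
    obtain ⟨p, hpX, hpd⟩ := Metric.mem_closure_iff.1 (hdense hx) r hrpos
    obtain ⟨L, hL⟩ := hlim p hpX
    have hcp : CauchySeq (fun i => f i p) := hL.cauchySeq
    obtain ⟨N, hN⟩ := Metric.cauchySeq_iff.1 hcp (ε/3) (by positivity)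
    refine ⟨N, fun m hm k hk => ?_⟩
    have hxball : x ∈ ball x (ρ x) := mem_ball_self (hρpos x hx)
    have hpball : p ∈ ball x (ρ x) := by
      rw [mem_ball, dist_comm]
      exact lt_of_lt_of_le hpd (min_le_left _ _)
    have hdistr : dist x p < r := hpd
    have hd : ∀ i, dist (f i x) (f i p) ≤ (KK x) * dist x p := fun i =>
      (hlipK x hx i).dist_le_mul x hxball p hpball
    have hKr : (KK x : ℝ) * dist x p ≤ ε/3 := by
      have h1 : dist x p ≤ ε/(3*((KK x : ℝ) + 1)) := le_of_lt (lt_of_lt_of_le hpd (min_le_right _ _))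
      have h2 : (KK x : ℝ) ≤ (KK x : ℝ) + 1 := by linarith
      calc (KK x : ℝ) * dist x p ≤ ((KK x : ℝ) + 1) * (ε/(3*((KK x : ℝ) + 1))) := by
            apply mul_le_mul h2 h1 dist_nonneg (by positivity)
      _ = ε/3 := by
            have h0 : ((KK x : ℝ) + 1) ≠ 0 := by positivity
            field_simp
    have hdm := le_trans (hd m) hKr
    have hdk := le_trans (hd k) hKr
    have tri := dist_triangle4 (f m x) (f m p) (f k p) (f k x)
    have hc : dist (f k p) (f k x) = dist (f k x) (f k p) := dist_comm _ _
    have hc2 : dist (f k x) (f k p) ≤ ε/3 := hdk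
    linarith [hN m hm k hk]
  choose! g hg using hcauchy
  refine ⟨g, ⟨hC, ?_⟩, hg, ?_⟩
  · -- convexity of g
    intro x hx y hy a b ha hb hab
    have hxy : a • x + b • y ∈ C := hC hx hy ha hb hab
    have h1 : Tendsto (fun i => f i (a • x + b • y)) atTop (nhds (g (a • x + b • y))) := hg _ hxy
    have h2 : Tendsto (fun i => a * f i x + b * f i y) atTop (nhds (a * g x + b * g y)) :=
      ((hg x hx).const_mul a).add ((hg y hy).const_mul b)
    have hle : ∀ i, f i (a • x + b • y) ≤ a * f i x + b * f i y := by
      intro i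
      have := (hconv i).2 hx hy ha hb hab
      simpa [smul_eq_mul] using this
    have := le_of_tendsto_of_tendsto' h1 h2 hle
    simpa [smul_eq_mul] using this
  · -- uniform convergence on compacts
    intro K hKC hK
    rw [Metric.tendstoUniformlyOn_iff]
    intro ε hε
    set r : E → ℝ := fun x => min (ρ x) (ε/(4*((KK x : ℝ) + 1))) with hrdef
    have hrpos : ∀ x ∈ K, 0 < r x := fun x hx => lt_min (hρpos x (hKC hx)) (by positivity)
    have hcover : K ⊆ ⋃ x ∈ K, ball x (r x) := fun x hx =>
      mem_biUnion hx (mem_ball_self (hrpos x hx))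
    obtain ⟨t, htK, htfin, htcover⟩ :=
      hK.elim_finite_subcover_image (fun x _ => isOpen_ball) hcover
    have hN : ∀ x ∈ t, ∃ N : ℕ, ∀ i ≥ N, dist (f i x) (g x) < ε/3 := by
      intro x hxt
      exact (Metric.tendsto_atTop.1 (hg x (hKC (htK hxt)))) (ε/3) (by positivity)
    choose! N hNs using hN
    set N0 := htfin.toFinset.sup N with hN0
    filter_upwards [eventually_ge_atTop N0] with i hi y hyK
    obtain ⟨x, hxt, hyball⟩ := by
      have := htcover hyK
      simpa using this
    have hxK : x ∈ K := htK hxt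
    have hxC : x ∈ C := hKC hxK
    have hyC : y ∈ C := hKC hyK
    have hxball : x ∈ ball x (ρ x) := mem_ball_self (hρpos x hxC)
    have hyball' : y ∈ ball x (ρ x) :=
      mem_ball.2 (lt_of_lt_of_le (mem_ball.1 hyball) (min_le_left _ _))
    have hKr : (KK x : ℝ) * dist y x ≤ ε/4 := by
      have h1 : dist y x ≤ ε/(4*((KK x : ℝ) + 1)) :=
        le_of_lt (lt_of_lt_of_le (mem_ball.1 hyball) (min_le_right _ _))
      have h2 : (KK x : ℝ) ≤ (KK x : ℝ) + 1 := by linarith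
      calc (KK x : ℝ) * dist y x ≤ ((KK x : ℝ) + 1) * (ε/(4*((KK x : ℝ) + 1))) :=
            mul_le_mul h2 h1 dist_nonneg (by positivity)
      _ = ε/4 := by
            have h0 : ((KK x : ℝ) + 1) ≠ 0 := by positivity
            field_simp
    have hd1 : dist (f i y) (f i x) ≤ ε/4 :=
      le_trans ((hlipK x hxC i).dist_le_mul y hyball' x hxball) hKr
    have hd2 : dist (g y) (g x) ≤ ε/4 := by
      have htend : Tendsto (fun i => dist (f i y) (f i x)) atTop (nhds (dist (g y) (g x))) :=
        (hg y hyC).dist (hg x hxC)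
      exact le_of_tendsto htend (Eventually.of_forall fun j =>
        le_trans ((hlipK x hxC j).dist_le_mul y hyball' x hxball) hKr)
    have hd3 : dist (f i x) (g x) < ε/3 :=
      hNs x hxt i (le_trans (Finset.le_sup (htfin.mem_toFinset.2 hxt)) hi)
    have hd3' : dist (g x) (f i x) < ε/3 := by rw [dist_comm]; exact hd3
    have hd1' : dist (f i x) (f i y) ≤ ε/4 := by rw [dist_comm]; exact hd1
    calc dist (g y) (f i y) ≤ dist (g y) (g x) + dist (g x) (f i x) + dist (f i x) (f i y) :=
          dist_triangle4 _ _ _ _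
    _ < ε := by linarith

theorem stmt2 (n : ℕ) (C X : Set (EuclideanSpace ℝ (Fin n)))
    (hC : Convex ℝ C) (hrel : intrinsicInterior ℝ C = C)
    (hX : X ⊆ C) (hdense : C ⊆ closure X)
    (f : ℕ → EuclideanSpace ℝ (Fin n) → ℝ)
    (hconv : ∀ i, ConvexOn ℝ C (f i))
    (hlim : ∀ x ∈ X, ∃ L : ℝ, Filter.Tendsto (fun i => f i x) Filter.atTop (nhds L)) :
    ∃ g : EuclideanSpace ℝ (Fin n) → ℝ, ConvexOn ℝ C g ∧
      (∀ x ∈ C, Filter.Tendsto (fun i => f i x) Filter.atTop (nhds (g x))) ∧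
      ∀ K ⊆ C, IsCompact K → TendstoUniformlyOn f g Filter.atTop K := by
  classical
  rcases Set.eq_empty_or_nonempty C with rfl | ⟨x0, hx0⟩
  · refine ⟨fun _ => 0, ⟨convex_empty, by simp⟩, by simp, ?_⟩
    intro K hK _
    rw [Set.subset_empty_iff] at hK
    subst hK
    exact tendstoUniformlyOn_empty
  set S := affineSpan ℝ C with hSdef
  have hCS : C ⊆ (S : Set (EuclideanSpace ℝ (Fin n))) := subset_affineSpan ℝ C
  have hx0S : x0 ∈ S := hCS hx0
  set V := S.direction with hVdef
  set e : V → EuclideanSpace ℝ (Fin n) := fun v => x0 + (v : EuclideanSpace ℝ (Fin n)) with he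
  have hmemdir : ∀ x : EuclideanSpace ℝ (Fin n), x ∈ S → x - x0 ∈ V := by
    intro x hxS
    have := (AffineSubspace.vsub_right_mem_direction_iff_mem hx0S x).2 hxS
    rwa [vsub_eq_sub] at this
  set φ : ∀ x : EuclideanSpace ℝ (Fin n), x ∈ S → V := fun x h => ⟨x - x0, hmemdir x h⟩ with hφ
  have heφ : ∀ (x : EuclideanSpace ℝ (Fin n)) (h : x ∈ S), e (φ x h) = x := by
    intro x h; simp [he, hφ]
  have hmem : ∀ v : V, e v ∈ S := by
    intro v
    have h2 : (e v) -ᵥ x0 ∈ S.direction := by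
      rw [vsub_eq_sub]
      simpa [he] using v.2
    exact (AffineSubspace.vsub_right_mem_direction_iff_mem hx0S _).1 h2
  have hiso : Isometry e := Isometry.of_dist_eq (by
    intro v w
    rw [he]
    simp only []
    rw [dist_add_left, Subtype.dist_eq])
  have heC : Continuous e := hiso.continuous
  set C' : Set V := e ⁻¹' C with hC'
  set X' : Set V := e ⁻¹' X with hX'
  -- affine combination compatibility
  have hkey : ∀ (a b : ℝ), a + b = 1 → ∀ v w : V, e (a • v + b • w) = a • e v + b • e w := by
    intro a b hab v w
    have hx0c : a • x0 + b • x0 = x0 := by rw [← add_smul, hab, one_smul]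
    have hdistrib : a • (x0 + (v : EuclideanSpace ℝ (Fin n))) + b • (x0 + (w : EuclideanSpace ℝ (Fin n)))
        = (a • x0 + b • x0) + (a • (v : EuclideanSpace ℝ (Fin n)) + b • (w : EuclideanSpace ℝ (Fin n))) := by
      rw [smul_add, smul_add]; abel
    simp only [he, Submodule.coe_add, Submodule.coe_smul]
    rw [hdistrib, hx0c]
  have hC'conv : Convex ℝ C' := by
    intro v hv w hw a b ha hb hab
    have := hC hv hw ha hb hab
    simpa [hC', Set.mem_preimage, hkey a b hab v w] using this
  -- openness of C'
  have hDopen : IsOpen ((Subtype.val : S → EuclideanSpace ℝ (Fin n)) ⁻¹' C) := by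
    rw [← interior_eq_iff_isOpen]
    apply Subset.antisymm interior_subset
    intro d hd
    have hdC : (d : EuclideanSpace ℝ (Fin n)) ∈ C := hd
    rw [← hrel] at hdC
    obtain ⟨y, hy, hyd⟩ := mem_intrinsicInterior.1 hdC
    have : y = d := Subtype.val_injective hyd
    rwa [← this]
  have hC'open : IsOpen C' := by
    have hcont : Continuous (fun v : V => (⟨e v, hmem v⟩ : S)) :=
      Continuous.subtype_mk heC _
    exact hcont.isOpen_preimage _ hDopen
  -- subsets and density
  have hX'C' : X' ⊆ C' := fun v hv => hX hv
  have hdense' : C' ⊆ closure X' := by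
    intro v hv
    rw [Metric.mem_closure_iff]
    intro ε hε
    obtain ⟨q, hqX, hq⟩ := Metric.mem_closure_iff.1 (hdense hv) ε hε
    have hqS : q ∈ S := hCS (hX hqX)
    refine ⟨φ q hqS, by simp [hX', Set.mem_preimage, heφ q hqS, hqX], ?_⟩
    have : dist v (φ q hqS) = dist (e v) (e (φ q hqS)) := (hiso.dist_eq _ _).symm
    rw [this, heφ q hqS]
    exact hq
  -- convexity of the composed functions
  have hconv' : ∀ i, ConvexOn ℝ C' (fun v => f i (e v)) := by
    intro i
    refine ⟨hC'conv, ?_⟩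
    intro v hv w hw a b ha hb hab
    have := (hconv i).2 hv hw ha hb hab
    simpa [hkey a b hab v w] using this
  have hlim' : ∀ v ∈ X', ∃ L : ℝ, Tendsto (fun i => f i (e v)) atTop (nhds L) :=
    fun v hv => hlim (e v) hv
  obtain ⟨g', hg'conv, hg'pt, hg'unif⟩ := core hC'conv hC'open hX'C' hdense' hconv' hlim'
  set g : EuclideanSpace ℝ (Fin n) → ℝ := fun x => if h : x ∈ S then g' (φ x h) else 0 with hg
  have hgeq : ∀ (x : EuclideanSpace ℝ (Fin n)) (h : x ∈ S), g x = g' (φ x h) := by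
    intro x h; simp [hg, dif_pos h]
  have hmemC' : ∀ (x : EuclideanSpace ℝ (Fin n)) (h : x ∈ C), φ x (hCS h) ∈ C' := by
    intro x h
    show e (φ x (hCS h)) ∈ C
    rw [heφ x (hCS h)]; exact h
  refine ⟨g, ⟨hC, ?_⟩, ?_, ?_⟩
  · -- convexity
    intro x hx y hy a b ha hb hab
    have hz : a • x + b • y ∈ C := hC hx hy ha hb hab
    have hφz : φ (a • x + b • y) (hCS hz) = a • φ x (hCS hx) + b • φ y (hCS hy) := by
      apply Subtype.ext
      simp only [hφ, Submodule.coe_add, Submodule.coe_smul]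
      have hx0c : a • x0 + b • x0 = x0 := by rw [← add_smul, hab, one_smul]
      have hdistrib : a • (x - x0) + b • (y - x0) = (a • x + b • y) - (a • x0 + b • x0) := by
        rw [smul_sub, smul_sub]; abel
      rw [hdistrib, hx0c]
    have := hg'conv.2 (hmemC' x hx) (hmemC' y hy) ha hb hab
    rw [hgeq _ (hCS hz), hgeq _ (hCS hx), hgeq _ (hCS hy), hφz]
    simpa using this
  · -- pointwise convergence
    intro x hx
    have := hg'pt (φ x (hCS hx)) (hmemC' x hx)
    rw [← hgeq x (hCS hx)] at this
    simpa [heφ x (hCS hx)] using this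
  · -- uniform convergence on compacts
    intro K hKC hK
    set K' : Set V := e ⁻¹' K with hK'
    have hKrange : K ⊆ Set.range e := by
      intro x hx
      exact ⟨φ x (hCS (hKC hx)), heφ x (hCS (hKC hx))⟩
    have hK'cpt : IsCompact K' :=
      (hiso.isEmbedding.isInducing.isCompact_preimage_iff hKrange).2 hK
    have hK'C' : K' ⊆ C' := fun v hv => hKC hv
    have huni := hg'unif K' hK'C' hK'cpt
    rw [Metric.tendstoUniformlyOn_iff] at huni ⊢
    intro ε hε
    filter_upwards [huni ε hε] with i hi y hyK
    have hyS : y ∈ S := hCS (hKC hyK)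
    have hv : φ y hyS ∈ K' := by
      show e (φ y hyS) ∈ K
      rw [heφ y hyS]; exact hyK
    have := hi (φ y hyS) hv
    rw [heφ y hyS] at this
    rwa [hgeq y hyS]
end

section
/- Let K, L ⊆ ℝⁿ be full-dimensional compact convex sets and H ⊆ ℝⁿ a hyperplane through the origin. If the orthogonal projections of K and L onto H coincide, then for every λ ∈ [0,1], vol(λK + (1−λ)L) ≥ λ·vol(K) + (1−λ)·vol(L), where the sum is the Minkowski sum. -/
open MeasureTheory Pointwise RealInnerProductSpace

lemma convex_closed_eq_Icc {A : Set ℝ} (hA : Convex ℝ A) (hne : A.Nonempty)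
    (hc : IsClosed A) (hbA : BddAbove A) (hbB : BddBelow A) :
    A = Set.Icc (sInf A) (sSup A) :=
  (subset_Icc_csInf_csSup hbB hbA).antisymm
    (hA.ordConnected.out (hc.csInf_mem hne hbB) (hc.csSup_mem hne hbA))

lemma dim1 {A B C : Set ℝ} {l : ℝ} (hl0 : 0 ≤ l) (hl1 : l ≤ 1)
    (hA : Convex ℝ A) (hAne : A.Nonempty) (hAc : IsClosed A)
    (hAba : BddAbove A) (hAbb : BddBelow A)
    (hB : Convex ℝ B) (hBne : B.Nonempty) (hBc : IsClosed B)
    (hBba : BddAbove B) (hBbb : BddBelow B)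
    (hC : Convex ℝ C)
    (hcomb : ∀ a ∈ A, ∀ b ∈ B, l * a + (1 - l) * b ∈ C) :
    ENNReal.ofReal l * volume A + ENNReal.ofReal (1 - l) * volume B ≤ volume C := by
  have hAeq := convex_closed_eq_Icc hA hAne hAc hAba hAbb
  have hBeq := convex_closed_eq_Icc hB hBne hBc hBba hBbb
  have hiA : sInf A ≤ sSup A := csInf_le_csSup hAne hAbb hAba
  have hiB : sInf B ≤ sSup B := csInf_le_csSup hBne hBbb hBba
  have hp : l * sInf A + (1 - l) * sInf B ∈ C :=
    hcomb _ (hAc.csInf_mem hAne hAbb) _ (hBc.csInf_mem hBne hBbb)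
  have hq : l * sSup A + (1 - l) * sSup B ∈ C :=
    hcomb _ (hAc.csSup_mem hAne hAba) _ (hBc.csSup_mem hBne hBba)
  have hIcc : Set.Icc (l * sInf A + (1 - l) * sInf B) (l * sSup A + (1 - l) * sSup B) ⊆ C :=
    hC.ordConnected.out hp hq
  have hvolA : volume A = ENNReal.ofReal (sSup A - sInf A) := by
    conv_lhs => rw [hAeq]
    rw [Real.volume_Icc]
  have hvolB : volume B = ENNReal.ofReal (sSup B - sInf B) := by
    conv_lhs => rw [hBeq]
    rw [Real.volume_Icc]
  calc ENNReal.ofReal l * volume A + ENNReal.ofReal (1 - l) * volume B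
      = ENNReal.ofReal (l * (sSup A - sInf A) + (1 - l) * (sSup B - sInf B)) := by
        rw [hvolA, hvolB,
          ENNReal.ofReal_add (mul_nonneg hl0 (by linarith)) (mul_nonneg (by linarith) (by linarith)),
          ENNReal.ofReal_mul hl0, ENNReal.ofReal_mul (by linarith)]
    _ = volume (Set.Icc (l * sInf A + (1 - l) * sInf B) (l * sSup A + (1 - l) * sSup B)) := by
        rw [Real.volume_Icc]; ring_nf
    _ ≤ volume C := measure_mono hIcc

set_option maxHeartbeats 1000000 in
theorem stmt3 (n : ℕ) (K L : Set (EuclideanSpace ℝ (Fin n)))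
    (hKcpt : IsCompact K) (hLcpt : IsCompact L)
    (hKconv : Convex ℝ K) (hLconv : Convex ℝ L)
    (hKfull : (interior K).Nonempty) (hLfull : (interior L).Nonempty)
    (u : EuclideanSpace ℝ (Fin n)) (hu : u ≠ 0)
    (hproj : (fun x => ((Submodule.orthogonalProjection (Submodule.span ℝ {u})ᗮ x : (Submodule.span ℝ {u})ᗮ) :
        EuclideanSpace ℝ (Fin n))) '' K =
      (fun x => ((Submodule.orthogonalProjection (Submodule.span ℝ {u})ᗮ x : (Submodule.span ℝ {u})ᗮ) :
        EuclideanSpace ℝ (Fin n))) '' L)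
    (l : ℝ) (hl : l ∈ Set.Icc (0 : ℝ) 1) :
    l * (volume K).toReal + (1 - l) * (volume L).toReal ≤
      (volume (l • K + (1 - l) • L)).toReal := by
  obtain ⟨hl0, hl1⟩ := hl
  rcases n with _ | m
  · exact absurd (Subsingleton.elim u 0) hu
  -- basis adapted to u
  set H := (Submodule.span ℝ {u})ᗮ with hH
  have hfE : Module.finrank ℝ (EuclideanSpace ℝ (Fin (m+1))) = m + 1 := finrank_euclideanSpace_fin
  haveI : Fact (Module.finrank ℝ (EuclideanSpace ℝ (Fin (m+1))) = m + 1) := ⟨hfE⟩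
  have hfH : Module.finrank ℝ ↥H = m := Submodule.finrank_orthogonal_span_singleton hu
  set uhat : EuclideanSpace ℝ (Fin (m+1)) := ‖u‖⁻¹ • u with huhat
  have hnu : ‖u‖ ≠ 0 := norm_ne_zero_iff.2 hu
  have huhatnorm : ‖uhat‖ = 1 := by
    rw [huhat, norm_smul, norm_inv, norm_norm, inv_mul_cancel₀ hnu]
  set bH := (stdOrthonormalBasis ℝ ↥H).reindex (finCongr hfH) with hbH
  set v : Fin (m+1) → EuclideanSpace ℝ (Fin (m+1)) := Fin.cons uhat (fun i => ((bH i : ↥H) : EuclideanSpace ℝ (Fin (m+1)))) with hv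
  have hbHmem : ∀ i : Fin m, ((bH i : ↥H) : EuclideanSpace ℝ (Fin (m+1))) ∈ H := fun i => (bH i).2
  have hinner_u : ∀ i : Fin m, inner ℝ u ((bH i : ↥H) : EuclideanSpace ℝ (Fin (m+1))) = (0:ℝ) := by
    intro i
    have := (Submodule.mem_orthogonal _ _).1 (hbHmem i) u (Submodule.mem_span_singleton_self u)
    simpa [real_inner_comm] using this
  have hinner_uhat : ∀ i : Fin m, inner ℝ uhat ((bH i : ↥H) : EuclideanSpace ℝ (Fin (m+1))) = (0:ℝ) := by
    intro i
    rw [huhat, inner_smul_left]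
    simp [hinner_u i]
  have hvon : Orthonormal ℝ v := by
    rw [orthonormal_iff_ite]
    intro i j
    induction i using Fin.cases with
    | zero =>
      induction j using Fin.cases with
      | zero =>
        simp only [hv, Fin.cons_zero, if_pos rfl]
        rw [real_inner_self_eq_norm_sq, huhatnorm]; norm_num
      | succ j' =>
        simp only [hv, Fin.cons_zero, Fin.cons_succ, if_neg (Fin.succ_ne_zero j').symm]
        exact hinner_uhat j'
    | succ i' =>
      induction j using Fin.cases with
      | zero =>
        simp only [hv, Fin.cons_zero, Fin.cons_succ, if_neg (Fin.succ_ne_zero i')]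
        rw [real_inner_comm]
        exact hinner_uhat i'
      | succ j' =>
        have := (orthonormal_iff_ite.1 bH.orthonormal) i' j'
        simp only [hv, Fin.cons_succ]
        rw [Submodule.coe_inner] at this
        simpa [Fin.succ_inj] using this
  have hcard : Fintype.card (Fin (m+1)) = Module.finrank ℝ (EuclideanSpace ℝ (Fin (m+1))) := by
    simp [hfE]
  have hspan : ⊤ ≤ Submodule.span ℝ (Set.range v) := by
    rw [← (basisOfOrthonormalOfCardEqFinrank hvon hcard).span_eq,
      coe_basisOfOrthonormalOfCardEqFinrank]
  set b : OrthonormalBasis (Fin (m+1)) ℝ (EuclideanSpace ℝ (Fin (m+1))) :=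
    OrthonormalBasis.mk hvon hspan with hb
  have hb0 : b 0 = uhat := by simp [hb, hv]
  have hbsucc : ∀ i : Fin m, b i.succ = ((bH i : ↥H) : EuclideanSpace ℝ (Fin (m+1))) := by
    intro i; simp [hb, hv]
  -- the coordinate map
  set Φe : EuclideanSpace ℝ (Fin (m+1)) ≃ᵐ (ℝ × (Fin m → ℝ)) :=
    (b.repr.toHomeomorph.toMeasurableEquiv.trans
      (MeasurableEquiv.toLp 2 (Fin (m+1) → ℝ)).symm).trans
      (MeasurableEquiv.piFinSuccAbove (fun _ : Fin (m+1) => ℝ) 0) with hΦe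
  have hΦdef : ∀ x, Φe x = (b.repr x 0, fun i => b.repr x i.succ) := by
    intro x
    simp only [hΦe, MeasurableEquiv.trans_apply, MeasurableEquiv.piFinSuccAbove_apply]
    refine Prod.ext rfl ?_
    funext i
    simp [Fin.removeNth, Fin.zero_succAbove]
    rfl
  have hΦmp : MeasurePreserving Φe volume volume := by
    have h1 : MeasurePreserving (⇑b.repr) volume volume := b.measurePreserving_repr
    have h2 := EuclideanSpace.volume_preserving_symm_measurableEquiv_toLp (Fin (m+1))
    have h3 := MeasureTheory.volume_preserving_piFinSuccAbove (fun _ : Fin (m+1) => ℝ) 0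
    exact (h3.comp h2).comp h1
  have hΦcont : Continuous Φe := by
    have h1 : Continuous (⇑b.repr) := b.repr.continuous
    have h2 : Continuous (⇑(MeasurableEquiv.toLp 2 (Fin (m+1) → ℝ)).symm) :=
      PiLp.continuous_ofLp 2 (fun _ : Fin (m+1) => ℝ)
    have h3 : Continuous (⇑(MeasurableEquiv.piFinSuccAbove (fun _ : Fin (m+1) => ℝ) 0)) := by
      refine Continuous.prodMk (continuous_apply _) ?_
      exact continuous_pi fun i => continuous_apply _
    exact (h3.comp h2).comp h1
  have hΦlin : ∀ (c d : ℝ) (x z : EuclideanSpace ℝ (Fin (m+1))),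
      Φe (c • x + d • z) = (c * (Φe x).1 + d * (Φe z).1, c • (Φe x).2 + d • (Φe z).2) := by
    intro c d x z
    rw [hΦdef, hΦdef, hΦdef]
    refine Prod.ext ?_ ?_
    · simp [map_add, _root_.map_smul]
    · funext i
      simp [map_add, _root_.map_smul]
  -- fibers
  set fib : Set (ℝ × (Fin m → ℝ)) → (Fin m → ℝ) → Set ℝ := fun S y => {t | (t, y) ∈ S} with hfib
  have hfib_pre : ∀ S y, fib S y = (fun t => (t, y)) ⁻¹' S := fun S y => rfl
  have himg_vol : ∀ A : Set (EuclideanSpace ℝ (Fin (m+1))), MeasurableSet A →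
      volume (⇑Φe '' A) = volume A := by
    intro A hA
    rw [MeasurableEquiv.image_eq_preimage_symm]
    exact (hΦmp.symm Φe).measure_preimage hA.nullMeasurableSet
  have hFub : ∀ S : Set (ℝ × (Fin m → ℝ)), MeasurableSet S →
      volume S = ∫⁻ y, volume (fib S y) := by
    intro S hS
    rw [MeasureTheory.Measure.volume_eq_prod, Measure.prod_apply_symm hS]
    rfl
  set M := l • K + (1 - l) • L with hM
  have hMcpt : IsCompact M := (hKcpt.smul l).add (hLcpt.smul (1 - l))
  have hMconv : Convex ℝ M := (hKconv.smul l).add (hLconv.smul (1 - l))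
  set KE := ⇑Φe '' K with hKE
  set LE := ⇑Φe '' L with hLE
  set SE := ⇑Φe '' M with hSE
  have hKEc : IsCompact KE := hKcpt.image hΦcont
  have hLEc : IsCompact LE := hLcpt.image hΦcont
  have hSEc : IsCompact SE := hMcpt.image hΦcont
  have himg_conv : ∀ A : Set (EuclideanSpace ℝ (Fin (m+1))), Convex ℝ A →
      Convex ℝ (⇑Φe '' A) := by
    rintro A hA _ ⟨x, hx, rfl⟩ _ ⟨z, hz, rfl⟩ a c ha hc hac
    refine ⟨a • x + c • z, hA hx hz ha hc hac, ?_⟩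
    rw [hΦlin]
    rfl
  have hKEconv : Convex ℝ KE := himg_conv _ hKconv
  have hLEconv : Convex ℝ LE := himg_conv _ hLconv
  have hSEconv : Convex ℝ SE := himg_conv _ hMconv
  have hfib_conv : ∀ (S : Set (ℝ × (Fin m → ℝ))), Convex ℝ S → ∀ y, Convex ℝ (fib S y) := by
    intro S hS y t1 ht1 t2 ht2 a c ha hc hac
    have h1 := hS ht1 ht2 ha hc hac
    have hy : a • ((t1 : ℝ), y) + c • ((t2 : ℝ), y) = (a * t1 + c * t2, y) := by
      refine Prod.ext rfl ?_
      show a • y + c • y = y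
      rw [← add_smul, hac, one_smul]
    rw [hy] at h1
    exact h1
  have hfib_closed : ∀ S : Set (ℝ × (Fin m → ℝ)), IsCompact S → ∀ y, IsClosed (fib S y) := by
    intro S hS y
    rw [hfib_pre]
    exact hS.isClosed.preimage (continuous_id.prodMk continuous_const)
  have hfib_bdd : ∀ S : Set (ℝ × (Fin m → ℝ)), IsCompact S → ∀ y,
      BddAbove (fib S y) ∧ BddBelow (fib S y) := by
    intro S hS y
    have hsub : fib S y ⊆ Prod.fst '' S := fun t ht => ⟨(t, y), ht, rfl⟩
    have hc : IsCompact (Prod.fst '' S) := hS.image continuous_fst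
    exact ⟨hc.bddAbove.mono hsub, hc.bddBelow.mono hsub⟩
  -- span characterization of coordinates
  have hcoord : ∀ w : EuclideanSpace ℝ (Fin (m+1)),
      (w ∈ Submodule.span ℝ {u}) ↔ ∀ i : Fin m, b.repr w i.succ = 0 := by
    intro w
    constructor
    · intro hw
      obtain ⟨c, hc⟩ := Submodule.mem_span_singleton.1 hw
      intro i
      have hurepr : u = ‖u‖ • b 0 := by
        rw [hb0, huhat, smul_smul, mul_inv_cancel₀ hnu, one_smul]
      rw [← hc, hurepr, smul_smul, _root_.map_smul, b.repr_self]
      classical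
      simp [EuclideanSpace.single_apply, (Fin.succ_ne_zero i)]
    · intro hw
      have hsum := b.sum_repr w
      rw [Fin.sum_univ_succ] at hsum
      have hweq : w = b.repr w 0 • b 0 := by
        rw [← hsum]
        simp [hw]
      rw [hweq, hb0, huhat, smul_smul]
      exact Submodule.smul_mem _ _ (Submodule.mem_span_singleton_self u)
  -- projection equality iff snd coordinates equal
  have hproj_iff : ∀ x z : EuclideanSpace ℝ (Fin (m+1)),
      ((Submodule.orthogonalProjection H x : ↥H) : EuclideanSpace ℝ (Fin (m+1))) =
        ((Submodule.orthogonalProjection H z : ↥H) : EuclideanSpace ℝ (Fin (m+1))) ↔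
      (Φe x).2 = (Φe z).2 := by
    intro x z
    have hmemiff : x - z ∈ Submodule.span ℝ {u} ↔ ∀ i : Fin m, b.repr x i.succ = b.repr z i.succ := by
      rw [hcoord (x - z)]
      constructor
      · intro h i
        have := h i
        rw [map_sub] at this
        have h2 : b.repr x i.succ - b.repr z i.succ = 0 := by
          simpa using this
        linarith
      · intro h i
        rw [map_sub]
        have := h i
        simp only [PiLp.sub_apply]
        linarith
    constructor
    · intro h
      have h1 : Submodule.orthogonalProjection H (x - z) = 0 := by
        rw [map_sub, sub_eq_zero]
        exact Subtype.coe_injective h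
      have h2 : x - z ∈ Hᗮ := Submodule.orthogonalProjection_eq_zero_iff.1 h1
      rw [hH, Submodule.orthogonal_orthogonal] at h2
      have h3 := hmemiff.1 h2
      rw [hΦdef, hΦdef]
      funext i
      exact h3 i
    · intro h
      have h3 : ∀ i : Fin m, b.repr x i.succ = b.repr z i.succ := by
        intro i
        have := congrFun h i
        rw [hΦdef, hΦdef] at this
        exact this
      have h2 : x - z ∈ Hᗮ := by
        rw [hH, Submodule.orthogonal_orthogonal]
        exact hmemiff.2 h3
      have h1 : Submodule.orthogonalProjection H (x - z) = 0 := Submodule.orthogonalProjection_eq_zero_iff.2 h2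
      rw [map_sub, sub_eq_zero] at h1
      exact congrArg _ h1
  -- equal images of snd coordinates
  have hsnd_img : (fun x => (Φe x).2) '' K = (fun x => (Φe x).2) '' L := by
    ext y
    constructor
    · rintro ⟨x, hx, rfl⟩
      have hmem : (fun x => ((Submodule.orthogonalProjection H x : ↥H) : EuclideanSpace ℝ (Fin (m+1)))) x ∈
          (fun x => ((Submodule.orthogonalProjection H x : ↥H) : EuclideanSpace ℝ (Fin (m+1)))) '' L := by
        rw [← hproj]
        exact Set.mem_image_of_mem _ hx
      obtain ⟨z, hz, hze⟩ := hmem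
      exact ⟨z, hz, (hproj_iff z x).1 hze⟩
    · rintro ⟨x, hx, rfl⟩
      have hmem : (fun x => ((Submodule.orthogonalProjection H x : ↥H) : EuclideanSpace ℝ (Fin (m+1)))) x ∈
          (fun x => ((Submodule.orthogonalProjection H x : ↥H) : EuclideanSpace ℝ (Fin (m+1)))) '' K := by
        rw [hproj]
        exact Set.mem_image_of_mem _ hx
      obtain ⟨z, hz, hze⟩ := hmem
      exact ⟨z, hz, (hproj_iff z x).1 hze⟩
  have hfib_ne : ∀ y, (fib KE y).Nonempty ↔ (fib LE y).Nonempty := by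
    have hchar : ∀ (A : Set (EuclideanSpace ℝ (Fin (m+1)))) y,
        (fib (⇑Φe '' A) y).Nonempty ↔ y ∈ (fun x => (Φe x).2) '' A := by
      intro A y
      constructor
      · rintro ⟨t, x, hx, hxe⟩
        exact ⟨x, hx, congrArg Prod.snd hxe⟩
      · rintro ⟨x, hx, hxy⟩
        exact ⟨(Φe x).1, x, hx, by rw [← hxy]⟩
    intro y
    rw [hKE, hLE, hchar, hchar, hsnd_img]
  -- pointwise fiber inequality
  have hptwise : ∀ y, ENNReal.ofReal l * volume (fib KE y) +
      ENNReal.ofReal (1 - l) * volume (fib LE y) ≤ volume (fib SE y) := by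
    intro y
    by_cases hne : (fib KE y).Nonempty
    · have hneL : (fib LE y).Nonempty := (hfib_ne y).1 hne
      refine dim1 hl0 hl1 (hfib_conv _ hKEconv y) hne (hfib_closed _ hKEc y)
        (hfib_bdd _ hKEc y).1 (hfib_bdd _ hKEc y).2
        (hfib_conv _ hLEconv y) hneL (hfib_closed _ hLEc y)
        (hfib_bdd _ hLEc y).1 (hfib_bdd _ hLEc y).2
        (hfib_conv _ hSEconv y) ?_
      rintro a ⟨x, hx, hxe⟩ c ⟨z, hz, hze⟩
      refine ⟨l • x + (1 - l) • z,
        Set.add_mem_add (Set.smul_mem_smul_set hx) (Set.smul_mem_smul_set hz), ?_⟩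
      rw [hΦlin, hxe, hze]
      refine Prod.ext rfl ?_
      show l • y + (1 - l) • y = y
      rw [← add_smul]
      norm_num
    · have hneL : ¬ (fib LE y).Nonempty := fun h => hne ((hfib_ne y).2 h)
      rw [Set.not_nonempty_iff_eq_empty] at hne hneL
      rw [hne, hneL]
      simp
  -- measurability
  have hKm : MeasurableSet K := hKcpt.isClosed.measurableSet
  have hLm : MeasurableSet L := hLcpt.isClosed.measurableSet
  have hMm : MeasurableSet M := hMcpt.isClosed.measurableSet
  have hKEm : MeasurableSet KE := hKEc.isClosed.measurableSet
  have hLEm : MeasurableSet LE := hLEc.isClosed.measurableSet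
  have hSEm : MeasurableSet SE := hSEc.isClosed.measurableSet
  have hmesK : Measurable fun y => volume (fib KE y) := by
    have := measurable_measure_prodMk_right (μ := (volume : Measure ℝ)) hKEm
    exact this
  have hmesL : Measurable fun y => volume (fib LE y) := by
    have := measurable_measure_prodMk_right (μ := (volume : Measure ℝ)) hLEm
    exact this
  -- main ENNReal inequality
  have hmain : ENNReal.ofReal l * volume K + ENNReal.ofReal (1 - l) * volume L ≤ volume M := by
    rw [← himg_vol K hKm, ← himg_vol L hLm, ← himg_vol M hMm, ← hKE, ← hLE, ← hSE]
    rw [hFub _ hKEm, hFub _ hLEm, hFub _ hSEm]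
    rw [← lintegral_const_mul _ hmesK, ← lintegral_const_mul _ hmesL,
      ← lintegral_add_left (hmesK.const_mul _)]
    exact lintegral_mono hptwise
  -- conclude
  have hKfin : volume K ≠ ⊤ := hKcpt.measure_lt_top.ne
  have hLfin : volume L ≠ ⊤ := hLcpt.measure_lt_top.ne
  have hMfin : volume M ≠ ⊤ := hMcpt.measure_lt_top.ne
  have hfinal := ENNReal.toReal_mono hMfin hmain
  rw [ENNReal.toReal_add (ENNReal.mul_ne_top ENNReal.ofReal_ne_top hKfin)
      (ENNReal.mul_ne_top ENNReal.ofReal_ne_top hLfin),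
    ENNReal.toReal_mul, ENNReal.toReal_mul, ENNReal.toReal_ofReal hl0,
    ENNReal.toReal_ofReal (by linarith : (0:ℝ) ≤ 1 - l)] at hfinal
  exact hfinal
end

section
/- Let P be a full-dimensional polytope in ℝⁿ (n-dimensional), Q ⊆ relint P a polytope with dim Q = n, and (f_i) a sequence of concave functions P → ℝ such that sup_i ∫_P |f_i| dx = C < ∞. Then there exists a subsequence (f_{k(i)}) that converges uniformly on Q to a concave function f : Q → ℝ. -/
open MeasureTheory Metric Set

variable {n : ℕ}

lemma integral_id_closedBall (c : EuclideanSpace ℝ (Fin n)) {r : ℝ} (hr : 0 < r) :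
    ⨍ y in closedBall c r, y = c := by
  have hpre : (fun t : EuclideanSpace ℝ (Fin n) => (c + c) - t) ⁻¹' closedBall c r
      = closedBall c r := by
    ext y
    simp only [mem_preimage, mem_closedBall]
    rw [dist_eq_norm, dist_eq_norm]
    congr! 1
    rw [← norm_neg]
    congr 1
    abel
  have hmp : MeasurePreserving (fun t : EuclideanSpace ℝ (Fin n) => (c + c) - t) volume volume :=
    Measure.measurePreserving_sub_left volume (c + c)
  have hemb : MeasurableEmbedding (fun t : EuclideanSpace ℝ (Fin n) => (c + c) - t) :=
    (MeasurableEquiv.subLeft (c + c)).measurableEmbedding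
  have key0 := hmp.setIntegral_preimage_emb hemb (fun y => y) (closedBall c r)
  rw [hpre] at key0
  have hint : IntegrableOn (fun y : EuclideanSpace ℝ (Fin n) => y) (closedBall c r) volume :=
    continuous_id.continuousOn.integrableOn_compact (isCompact_closedBall c r)
  have hconst : IntegrableOn (fun _ : EuclideanSpace ℝ (Fin n) => c + c) (closedBall c r)
      volume := integrableOn_const measure_closedBall_lt_top.ne
  have key : (volume (closedBall c r)).toReal • (c + c) - (∫ y in closedBall c r, y)
      = ∫ y in closedBall c r, y := by
    rw [← measureReal_def, ← setIntegral_const (μ := (volume : Measure (EuclideanSpace ℝ (Fin n)))) (s := closedBall c r) (c + c),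
      ← integral_sub hconst hint]
    exact key0
  have hV : (volume (closedBall c r)).toReal ≠ 0 := by
    refine ne_of_gt (ENNReal.toReal_pos ?_ measure_closedBall_lt_top.ne)
    exact (measure_closedBall_pos volume c hr).ne'
  have h2 : (∫ y in closedBall c r, y) = ((volume (closedBall c r)).toReal * 2⁻¹) • (c + c) := by
    have := sub_eq_iff_eq_add.mp key
    have h3 : (volume (closedBall c r)).toReal • (c + c)
        = (2:ℝ) • (∫ y in closedBall c r, y) := by rw [this, two_smul]
    calc (∫ y in closedBall c r, y) = ((2:ℝ)⁻¹ * 2) • (∫ y in closedBall c r, y) := by norm_num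
      _ = (2:ℝ)⁻¹ • ((2:ℝ) • ∫ y in closedBall c r, y) := by rw [mul_smul]
      _ = (2:ℝ)⁻¹ • ((volume (closedBall c r)).toReal • (c + c)) := by rw [h3]
      _ = ((volume (closedBall c r)).toReal * 2⁻¹) • (c + c) := by
          rw [smul_smul, mul_comm]
  rw [setAverage_eq, measureReal_def, h2, smul_smul, ← mul_assoc, inv_mul_cancel₀ hV, one_mul, smul_add]
  module

lemma concave_integrableOn {P : Set (EuclideanSpace ℝ (Fin n))}
    (hPpoly : ∃ S : Finset (EuclideanSpace ℝ (Fin n)), P = convexHull ℝ (S : Set _))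
    (hPfull : (interior P).Nonempty) {f : EuclideanSpace ℝ (Fin n) → ℝ}
    (hf : ConcaveOn ℝ P f) : IntegrableOn f P volume := by
  obtain ⟨S, hS⟩ := hPpoly
  obtain ⟨x₀, hx₀⟩ := hPfull
  have hx₀P : x₀ ∈ P := interior_subset hx₀
  have hPcompact : IsCompact P := by rw [hS]; exact S.finite_toSet.isCompact_convexHull (𝕜 := ℝ)
  have hPconv : Convex ℝ P := by rw [hS]; exact convex_convexHull ℝ _
  -- ball inside P
  obtain ⟨r, hr, hball⟩ : ∃ r > 0, ball x₀ r ⊆ P := by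
    rcases Metric.mem_nhds_iff.1 (mem_interior_iff_mem_nhds.1 hx₀) with ⟨r, hr, h⟩
    exact ⟨r, hr, h⟩
  -- lower bound
  have hSne : S.Nonempty := by
    rcases Finset.eq_empty_or_nonempty S with h | h
    · exfalso; rw [h] at hS; simp at hS; rw [hS] at hx₀P; exact hx₀P
    · exact h
  set m : ℝ := S.inf' hSne f with hm
  have hlow : ∀ x ∈ P, m ≤ f x := by
    intro x hx
    have hts : (S : Set (EuclideanSpace ℝ (Fin n))) ⊆ P := by
      rw [hS]; exact subset_convexHull ℝ _
    have hx' : x ∈ convexHull ℝ (S : Set (EuclideanSpace ℝ (Fin n))) := by rwa [← hS]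
    obtain ⟨y, hy, hyx⟩ := hf.exists_le_of_mem_convexHull hts hx'
    exact (Finset.inf'_le f hy).trans hyx
  -- diameter bound
  obtain ⟨R, hR⟩ : ∃ R : ℝ, ∀ y ∈ P, ‖x₀ - y‖ ≤ R := by
    obtain ⟨R, hR⟩ := hPcompact.isBounded.subset_closedBall x₀
    exact ⟨R, fun y hy => by
      have := hR hy; rw [mem_closedBall, dist_eq_norm] at this
      rwa [norm_sub_rev]⟩
  have hR0 : 0 ≤ R := le_trans (by simp) (hR x₀ hx₀P)
  -- upper bound
  have hupEx : ∃ Mu : ℝ, ∀ x ∈ P, f x ≤ Mu := by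
    obtain ⟨s, hs0, hsR⟩ : ∃ s : ℝ, 0 < s ∧ s * R < r :=
      ⟨r / (2 * (R + 1)), by positivity, by
        rw [div_mul_eq_mul_div, div_lt_iff₀ (by positivity)]; nlinarith⟩
    have h1s : (0:ℝ) < 1 + s := by positivity
    refine ⟨((1 + s) * f x₀ - m) / s, ?_⟩
    intro y hy
    have hz : x₀ + s • (x₀ - y) ∈ P := by
      apply hball
      rw [mem_ball, dist_eq_norm]
      have heq : ‖x₀ + s • (x₀ - y) - x₀‖ = s * ‖x₀ - y‖ := by
        rw [add_sub_cancel_left, norm_smul, Real.norm_eq_abs, abs_of_pos hs0]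
      rw [heq]
      calc s * ‖x₀ - y‖ ≤ s * R := mul_le_mul_of_nonneg_left (hR y hy) hs0.le
        _ < r := hsR
    have ha : (0:ℝ) ≤ 1/(1+s) := by positivity
    have hb : (0:ℝ) ≤ s/(1+s) := by positivity
    have hab : 1/(1+s) + s/(1+s) = (1:ℝ) := by field_simp
    have hcomb := hf.2 hz hy ha hb hab
    simp only [smul_eq_mul] at hcomb
    have hpt : (1/(1+s)) • (x₀ + s • (x₀ - y)) + (s/(1+s)) • y = x₀ := by
      rw [smul_add, smul_smul, smul_sub]
      match_scalars <;> field_simp <;> ring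
    rw [hpt] at hcomb
    have hzlow : m ≤ f (x₀ + s • (x₀ - y)) := hlow _ hz
    rw [le_div_iff₀ hs0]
    have h2 : (1/(1+s)) * m + (s/(1+s)) * f y ≤ f x₀ := by
      have := mul_le_mul_of_nonneg_left hzlow (by positivity : (0:ℝ) ≤ 1/(1+s))
      linarith
    have h3 := mul_le_mul_of_nonneg_left h2 h1s.le
    rw [mul_add] at h3
    have e1 : (1+s) * ((1/(1+s)) * m) = m := by field_simp
    have e2 : (1+s) * ((s/(1+s)) * f y) = s * f y := by field_simp
    rw [e1, e2] at h3
    linarith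
  obtain ⟨Mu, hup⟩ := hupEx
  -- measurability
  have hfrontier : volume (frontier P) = 0 := hPconv.addHaar_frontier volume
  have haemeq : P =ᵐ[volume] interior P := by
    rw [Filter.eventuallyEq_set]
    have h1 : volume (P \ interior P) = 0 := by
      refine measure_mono_null ?_ hfrontier
      intro x hx
      rw [hPcompact.isClosed.frontier_eq]
      exact hx
    have h2 : ∀ᵐ x ∂(volume : Measure (EuclideanSpace ℝ (Fin n))), x ∉ P \ interior P :=
      (ae_iff.2 (by simp only [not_not]; exact h1))
    filter_upwards [h2] with x hx
    constructor
    · intro hxP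
      by_contra h
      exact hx ⟨hxP, h⟩
    · exact fun h => interior_subset h
  have hrestr : volume.restrict P = volume.restrict (interior P) :=
    Measure.restrict_congr_set haemeq
  have hmeas : AEStronglyMeasurable f (volume.restrict P) := by
    rw [hrestr]
    exact (hf.continuousOn_interior).aestronglyMeasurable isOpen_interior.measurableSet
  refine ⟨hmeas, HasFiniteIntegral.restrict_of_bounded (C := max |m| |Mu|)
    hPcompact.measure_lt_top ?_⟩
  refine ae_restrict_of_forall_mem hPcompact.isClosed.measurableSet ?_
  intro x hx
  rw [Real.norm_eq_abs, abs_le]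
  constructor
  · have := hlow x hx
    have : -|m| ≤ f x := le_trans (neg_abs_le m) this
    exact le_trans (by simp) this
  · exact le_trans (hup x hx) (le_trans (le_abs_self _) (le_max_right _ _))

lemma setInt_abs_le {P B : Set (EuclideanSpace ℝ (Fin n))} {f : EuclideanSpace ℝ (Fin n) → ℝ}
    {C : ℝ} (hfi : IntegrableOn f P volume) (hC : (∫ x in P, |f x|) ≤ C) (hBP : B ⊆ P) :
    (∫ y in B, |f y|) ≤ C := by
  refine le_trans (setIntegral_mono_set hfi.abs
    (Filter.Eventually.of_forall fun y => abs_nonneg _) hBP.eventuallyLE) hC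

lemma jensen_lb {P : Set (EuclideanSpace ℝ (Fin n))} {f : EuclideanSpace ℝ (Fin n) → ℝ} {C : ℝ}
    (hf : ConcaveOn ℝ P f) (hfi : IntegrableOn f P volume) (hC : (∫ x in P, |f x|) ≤ C)
    {x : EuclideanSpace ℝ (Fin n)} {r : ℝ} (hr : 0 < r)
    (hball : closedBall x r ⊆ interior P) :
    -(C / (volume (closedBall x r)).toReal) ≤ f x := by
  have hBP : closedBall x r ⊆ P := hball.trans interior_subset
  have hfB : ConcaveOn ℝ (closedBall x r) f := hf.subset hBP (convex_closedBall _ _)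
  have hgc : ContinuousOn f (closedBall x r) := hf.continuousOn_interior.mono hball
  have h0 : volume (closedBall x r) ≠ 0 := (measure_closedBall_pos volume x hr).ne'
  have ht : volume (closedBall x r) ≠ ⊤ := measure_closedBall_lt_top.ne
  have hfs : ∀ᵐ y ∂(volume.restrict (closedBall x r)), y ∈ closedBall x r :=
    ae_restrict_mem measurableSet_closedBall
  have hfi_id : IntegrableOn (fun y : EuclideanSpace ℝ (Fin n) => y) (closedBall x r) volume :=
    continuous_id.continuousOn.integrableOn_compact (isCompact_closedBall x r)
  have hgi : IntegrableOn (f ∘ fun y : EuclideanSpace ℝ (Fin n) => y) (closedBall x r) volume :=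
    hfi.mono_set hBP
  have hJ := hfB.le_map_set_average hgc Metric.isClosed_closedBall h0 ht hfs hfi_id hgi
  rw [integral_id_closedBall x hr] at hJ
  refine le_trans ?_ hJ
  have hfiB : IntegrableOn f (closedBall x r) volume := hfi.mono_set hBP
  have e1 : ∫ y in closedBall x r, -|f y| ≤ ∫ y in closedBall x r, f y :=
    integral_mono hfiB.abs.neg hfiB (fun y => neg_abs_le _)
  rw [integral_neg] at e1
  have e2 : (∫ y in closedBall x r, |f y|) ≤ C := setInt_abs_le hfi hC hBP
  have hInt : -C ≤ ∫ y in closedBall x r, f y := by linarith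
  rw [setAverage_eq, smul_eq_mul]
  have hV : 0 < (volume (closedBall x r)).toReal :=
    ENNReal.toReal_pos h0 ht
  rw [div_eq_inv_mul, ← mul_neg]
  exact mul_le_mul_of_nonneg_left hInt (by positivity :
    (0:ℝ) ≤ ((volume (closedBall x r)).toReal)⁻¹)

lemma concave_ub {P : Set (EuclideanSpace ℝ (Fin n))} {f : EuclideanSpace ℝ (Fin n) → ℝ}
    {C m : ℝ} (hf : ConcaveOn ℝ P f) (hfi : IntegrableOn f P volume)
    (hC : (∫ x in P, |f x|) ≤ C) {x : EuclideanSpace ℝ (Fin n)} {r : ℝ} (hr : 0 < r)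
    (hball2 : closedBall x (2*r) ⊆ P)
    (hlow : ∀ z ∈ closedBall x (2*r), -m ≤ f z) :
    f x ≤ m + 2*C/(volume (closedBall x r)).toReal := by
  have hxP : x ∈ P := hball2 (mem_closedBall_self (by linarith))
  have hBP : closedBall x r ⊆ P := (closedBall_subset_closedBall (by linarith)).trans hball2
  have hptws : ∀ y ∈ closedBall x r, (f x - m)/2 ≤ f y := by
    intro y hy
    have hz : x + (2:ℝ) • (y - x) ∈ closedBall x (2*r) := by
      rw [mem_closedBall, dist_eq_norm, add_sub_cancel_left, norm_smul, Real.norm_ofNat]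
      have : ‖y - x‖ ≤ r := by rwa [mem_closedBall, dist_eq_norm] at hy
      linarith
    have hcomb := hf.2 hxP (hball2 hz) (by norm_num : (0:ℝ) ≤ 1/2)
      (by norm_num : (0:ℝ) ≤ 1/2) (by norm_num : (1:ℝ)/2 + 1/2 = 1)
    simp only [smul_eq_mul] at hcomb
    have hpt : (1/2 : ℝ) • x + (1/2 : ℝ) • (x + (2:ℝ) • (y - x)) = y := by module
    rw [hpt] at hcomb
    have := hlow _ hz
    linarith
  have h0 : volume (closedBall x r) ≠ 0 := (measure_closedBall_pos volume x hr).ne'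
  have ht : volume (closedBall x r) ≠ ⊤ := measure_closedBall_lt_top.ne
  have hV : 0 < (volume (closedBall x r)).toReal := ENNReal.toReal_pos h0 ht
  have hfiB : IntegrableOn f (closedBall x r) volume := hfi.mono_set hBP
  have hge := setIntegral_ge_of_const_le_real measurableSet_closedBall ht hptws hfiB
  have e1 : ∫ y in closedBall x r, f y ≤ ∫ y in closedBall x r, |f y| :=
    integral_mono hfiB hfiB.abs (fun y => le_abs_self _)
  have e2 : (∫ y in closedBall x r, |f y|) ≤ C := setInt_abs_le hfi hC hBP
  have hkey : (f x - m)/2 * (volume (closedBall x r)).toReal ≤ C := by rw [measureReal_def] at hge; linarith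
  have h2 : (f x - m) * (volume (closedBall x r)).toReal ≤ 2*C := by nlinarith
  have h3 : f x - m ≤ 2*C/(volume (closedBall x r)).toReal := (le_div_iff₀ hV).mpr h2
  linarith

theorem stmt4 (n : ℕ) (P Q : Set (EuclideanSpace ℝ (Fin n)))
    (hPpoly : ∃ S : Finset (EuclideanSpace ℝ (Fin n)), P = convexHull ℝ (S : Set _))
    (hQpoly : ∃ S : Finset (EuclideanSpace ℝ (Fin n)), Q = convexHull ℝ (S : Set _))
    (hPfull : (interior P).Nonempty) (hQfull : (interior Q).Nonempty)
    (hQP : Q ⊆ interior P)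
    (f : ℕ → EuclideanSpace ℝ (Fin n) → ℝ) (C : ℝ)
    (hconc : ∀ i, ConcaveOn ℝ P (f i))
    (hL1 : ∀ i, (∫ x in P, |f i x|) ≤ C) :
    ∃ k : ℕ → ℕ, StrictMono k ∧ ∃ g : EuclideanSpace ℝ (Fin n) → ℝ,
      ConcaveOn ℝ Q g ∧ TendstoUniformlyOn (fun i => f (k i)) g Filter.atTop Q := by
  classical
  obtain ⟨SQ, hSQ⟩ := hQpoly
  have hQcomp : IsCompact Q := by rw [hSQ]; exact SQ.finite_toSet.isCompact_convexHull (𝕜 := ℝ)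
  have hQconv : Convex ℝ Q := by rw [hSQ]; exact convex_convexHull ℝ _
  have hQP' : Q ⊆ P := hQP.trans interior_subset
  have hC0 : 0 ≤ C := le_trans (integral_nonneg (fun x => abs_nonneg _)) (hL1 0)
  have hfint : ∀ i, IntegrableOn (f i) P volume :=
    fun i => concave_integrableOn hPpoly hPfull (hconc i)
  obtain ⟨δ, hδ0, hδ⟩ := hQcomp.exists_cthickening_subset_open isOpen_interior hQP
  -- key radius and volume
  have hr4 : (0:ℝ) < δ/4 := by linarith
  set V : ℝ := (volume (closedBall (0 : EuclideanSpace ℝ (Fin n)) (δ/4))).toReal with hV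
  have hV0 : 0 < V := ENNReal.toReal_pos
    (measure_closedBall_pos volume _ hr4).ne' measure_closedBall_lt_top.ne
  have hVol : ∀ x : EuclideanSpace ℝ (Fin n), (volume (closedBall x (δ/4))).toReal = V := by
    intro x; rw [hV, Measure.addHaar_closedBall_center]
  -- balls around thickened points stay inside (interior P)
  have hsub : ∀ (a : ℝ), 0 ≤ a → a + δ/4 ≤ δ → ∀ x ∈ cthickening a Q,
      closedBall x (δ/4) ⊆ interior P := by
    intro a ha haδ x hx
    refine (closedBall_subset_cthickening hx (δ/4)).trans ?_
    refine ((cthickening_cthickening_subset (by linarith) ha Q).trans ?_)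
    exact (cthickening_mono (by linarith) Q).trans hδ
  -- lower bound
  have hlow : ∀ i, ∀ x ∈ cthickening (3*δ/4) Q, -(C/V) ≤ f i x := by
    intro i x hx
    have := jensen_lb (hconc i) (hfint i) (hL1 i) hr4
      (hsub (3*δ/4) (by linarith) (by linarith) x hx)
    rwa [hVol] at this
  -- upper bound
  have hup : ∀ i, ∀ x ∈ cthickening (δ/4) Q, f i x ≤ 3*C/V := by
    intro i x hx
    have hball2 : closedBall x (2*(δ/4)) ⊆ P := by
      refine (closedBall_subset_cthickening hx (2*(δ/4))).trans ?_
      refine ((cthickening_cthickening_subset (by linarith) (by linarith) Q).trans ?_)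
      exact ((cthickening_mono (by linarith) Q).trans hδ).trans interior_subset
    have hlowz : ∀ z ∈ closedBall x (2*(δ/4)), -(C/V) ≤ f i z := by
      intro z hz
      refine hlow i z ?_
      have : z ∈ cthickening (2*(δ/4)) (cthickening (δ/4) Q) :=
        closedBall_subset_cthickening hx (2*(δ/4)) hz
      have h2 := cthickening_cthickening_subset
        (show (0:ℝ) ≤ 2*(δ/4) by linarith) (show (0:ℝ) ≤ δ/4 by linarith) Q this
      have he : (2*(δ/4) + δ/4 : ℝ) = 3*δ/4 := by ring
      rw [he] at h2
      exact h2
    have := concave_ub (hconc i) (hfint i) (hL1 i) hr4 hball2 hlowz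
    rw [hVol] at this
    calc f i x ≤ C/V + 2*C/V := this
      _ = 3*C/V := by ring
  -- absolute bound M on cthickening (δ/4) Q
  set M : ℝ := 3*C/V with hM
  have hM0 : 0 ≤ M := by positivity
  have habs : ∀ i, ∀ x ∈ cthickening (δ/4) Q, |f i x| ≤ M := by
    intro i x hx
    rw [abs_le]
    constructor
    · have h1 := hlow i x (cthickening_mono (by linarith) Q hx)
      have hCV : C/V ≤ 3*C/V := by
        gcongr
        linarith
      linarith
    · exact hup i x hx
  -- Lipschitz constant
  set K : ℝ := 2*M/(δ/8) with hK
  have hK0 : 0 ≤ K := by positivity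
  -- local Lipschitz on balls around points of Q
  have hlips : ∀ i, ∀ q ∈ Q, LipschitzOnWith K.toNNReal (f i) (ball q (δ/8)) := by
    intro i q hq
    have hballQ : ball q (δ/4) ⊆ cthickening (δ/4) Q :=
      ball_subset_closedBall.trans (closedBall_subset_cthickening hq (δ/4))
    have hballP : ball q (δ/4) ⊆ P :=
      hballQ.trans ((cthickening_mono (by linarith) Q).trans (hδ.trans interior_subset))
    have hfB : ConcaveOn ℝ (ball q (δ/4)) (f i) :=
      (hconc i).subset hballP (convex_ball q (δ/4))
    have habsB : ∀ a, dist a q < δ/4 → |f i a| ≤ M := by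
      intro a ha
      exact habs i a (hballQ (mem_ball.mpr ha))
    have := hfB.lipschitzOnWith_of_abs_le (show (0:ℝ) < δ/8 by linarith) habsB
    have he : δ/4 - δ/8 = δ/8 := by ring
    rwa [he] at this
  -- bounded continuous functions on Q
  haveI : CompactSpace Q := isCompact_iff_compactSpace.mp hQcomp
  have hcont : ∀ i, Continuous (fun q : Q => f i q) := by
    intro i
    exact (hconc i).continuousOn_interior.comp_continuous continuous_subtype_val
      (fun q => hQP q.2)
  set F : ℕ → BoundedContinuousFunction Q ℝ :=
    fun i => BoundedContinuousFunction.mkOfCompact ⟨fun q : Q => f i q, hcont i⟩ with hF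
  have hFmem : ∀ (j : ℕ) (q : Q), F j q ∈ Icc (-M) M := by
    intro j q
    have := habs j q (self_subset_cthickening Q q.2)
    rw [abs_le] at this
    exact this
  -- equicontinuity
  have hequi : Equicontinuous (fun (g : Set.range F) (q : Q) =>
      ((g : BoundedContinuousFunction Q ℝ) q)) := by
    intro q₀
    rw [Metric.equicontinuousAt_iff]
    intro ε hε
    refine ⟨min (δ/8) (ε/(K+1)), by positivity, fun q hq g => ?_⟩
    obtain ⟨i, hi⟩ := g.2
    have hcoe : ((g : BoundedContinuousFunction Q ℝ) : Q → ℝ) = fun q : Q => f i q := by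
      rw [← hi]; rfl
    have hq0mem : (q₀ : EuclideanSpace ℝ (Fin n)) ∈ ball (q₀ : EuclideanSpace ℝ (Fin n)) (δ/8) :=
      mem_ball_self (by linarith)
    have hqmem : (q : EuclideanSpace ℝ (Fin n)) ∈ ball (q₀ : EuclideanSpace ℝ (Fin n)) (δ/8) := by
      rw [mem_ball]
      calc dist (q : EuclideanSpace ℝ (Fin n)) q₀ = dist q q₀ := (Subtype.dist_eq q q₀).symm
        _ < min (δ/8) (ε/(K+1)) := hq
        _ ≤ δ/8 := min_le_left _ _
    have hdle := (hlips i q₀ q₀.2).dist_le_mul _ hq0mem _ hqmem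
    rw [Real.coe_toNNReal K hK0] at hdle
    have hqd : dist (q₀ : EuclideanSpace ℝ (Fin n)) q < ε/(K+1) := by
      rw [dist_comm]
      calc dist (q : EuclideanSpace ℝ (Fin n)) q₀ = dist q q₀ := (Subtype.dist_eq q q₀).symm
        _ < min (δ/8) (ε/(K+1)) := hq
        _ ≤ ε/(K+1) := min_le_right _ _
    have hfin : K * dist (q₀ : EuclideanSpace ℝ (Fin n)) q < ε := by
      have h1 : K * dist (q₀ : EuclideanSpace ℝ (Fin n)) q ≤ K * (ε/(K+1)) :=
        mul_le_mul_of_nonneg_left hqd.le hK0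
      have h2 : K * (ε/(K+1)) < ε := by
        rw [mul_div_assoc']
        rw [div_lt_iff₀ (by positivity : (0:ℝ) < K+1)]
        nlinarith
      linarith
    calc dist ((g : BoundedContinuousFunction Q ℝ) q₀) ((g : BoundedContinuousFunction Q ℝ) q)
        = dist (f i q₀) (f i q) := by rw [hcoe]
      _ ≤ K * dist (q₀ : EuclideanSpace ℝ (Fin n)) q := hdle
      _ < ε := hfin
  -- Arzelà–Ascoli
  have hAA : IsCompact (closure (Set.range F)) :=
    BoundedContinuousFunction.arzela_ascoli (Icc (-M) M) isCompact_Icc (Set.range F)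
      (fun g q hg => by obtain ⟨i, rfl⟩ := hg; exact hFmem i q) hequi
  obtain ⟨G, hGmem, k, hkmono, hktend⟩ :=
    hAA.isSeqCompact (fun i : ℕ => subset_closure (Set.mem_range_self (f := F) i))
  -- the limit function
  set g : EuclideanSpace ℝ (Fin n) → ℝ := fun x => if h : x ∈ Q then G ⟨x, h⟩ else 0 with hg
  have hunif : TendstoUniformlyOn (fun i => f (k i)) g Filter.atTop Q := by
    rw [tendstoUniformlyOn_iff_tendstoUniformly_comp_coe]
    have h1 : TendstoUniformly (fun i => ⇑(F (k i))) ⇑G Filter.atTop :=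
      BoundedContinuousFunction.tendsto_iff_tendstoUniformly.mp hktend
    have he1 : (fun (i : ℕ) (x : Q) => f (k i) ↑x) = fun i => ⇑(F (k i)) := rfl
    have he2 : (g ∘ (Subtype.val : Q → EuclideanSpace ℝ (Fin n))) = ⇑G := by
      funext x
      simp only [Function.comp_apply, hg]
      rw [dif_pos x.2]
    rw [he1, he2]
    exact h1
  refine ⟨k, hkmono, g, ?_, hunif⟩
  -- concavity of the limit
  refine ⟨hQconv, ?_⟩
  intro x hx y hy a b ha hb hab
  have hxy : a • x + b • y ∈ Q := hQconv hx hy ha hb hab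
  have htx : Filter.Tendsto (fun i => f (k i) x) Filter.atTop (nhds (g x)) :=
    hunif.tendsto_at hx
  have hty : Filter.Tendsto (fun i => f (k i) y) Filter.atTop (nhds (g y)) :=
    hunif.tendsto_at hy
  have htxy : Filter.Tendsto (fun i => f (k i) (a • x + b • y)) Filter.atTop
      (nhds (g (a • x + b • y))) := hunif.tendsto_at hxy
  have hcombo : Filter.Tendsto (fun i => a * f (k i) x + b * f (k i) y) Filter.atTop
      (nhds (a * g x + b * g y)) := ((htx.const_mul a).add (hty.const_mul b))
  have hle : ∀ i, a * f (k i) x + b * f (k i) y ≤ f (k i) (a • x + b • y) := by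
    intro i
    have := (hconc (k i)).2 (hQP' hx) (hQP' hy) ha hb hab
    simpa [smul_eq_mul] using this
  have := le_of_tendsto_of_tendsto' hcombo htxy hle
  simpa [smul_eq_mul] using this
end

section
/- Let (K_t)_{t∈[0,1]} be a family of full-dimensional convex bodies in ℝⁿ such that for every continuous function f : ℝⁿ → ℝ the map t ↦ ∫_{K_t} f dx is differentiable from the right at t = 0. Then limsup_{t→0⁺} vol(K_t △ K_0)/t < ∞, where △ denotes the symmetric difference. In particular K_t → K_0 in the symmetric difference metric (and hence in the Hausdorff metric) as t → 0⁺. -/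
open MeasureTheory Filter

section aux

variable {n : ℕ}

lemma half_estimate (A B : Set (EuclideanSpace ℝ (Fin n))) (hA : IsCompact A) (hB : IsCompact B)
    {ε : ℝ} (hε : 0 < ε) :
    ∃ g : EuclideanSpace ℝ (Fin n) → ℝ, Continuous g ∧ (∀ x, g x ∈ Set.Icc (0:ℝ) 1) ∧
      (volume (A \ B)).toReal - 2*ε ≤ (∫ x in A, g x) - ∫ x in B, g x := by
  set S := A \ B with hSdef
  have hSmeas : MeasurableSet S := hA.isClosed.measurableSet.diff hB.isClosed.measurableSet
  have hSfin : volume S ≠ ⊤ :=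
    ((measure_mono Set.diff_subset).trans_lt hA.measure_lt_top).ne
  have hεE : (ENNReal.ofReal ε) ≠ 0 := by
    simpa [ENNReal.ofReal_eq_zero, not_le] using hε
  obtain ⟨C, hCS, hCcomp, hvolC⟩ := hSmeas.exists_isCompact_lt_add hSfin hεE
  obtain ⟨U, hSU, hUopen, hvolU⟩ := S.exists_isOpen_lt_add hSfin hεE
  have hdisj : Disjoint C Uᶜ := by
    rw [Set.disjoint_compl_right_iff_subset]
    exact hCS.trans hSU
  obtain ⟨g, hg0, hg1, hg01⟩ :=
    exists_continuous_zero_one_of_isCompact' hCcomp hUopen.isClosed_compl hdisj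
  have intgA : IntegrableOn (fun x => g x) A volume :=
    g.continuous.continuousOn.integrableOn_compact hA
  have intgB : IntegrableOn (fun x => g x) B volume :=
    g.continuous.continuousOn.integrableOn_compact hB
  refine ⟨g, g.continuous, hg01, ?_⟩
  -- lower bound for ∫_A g
  have e1 : ∫ x in C, g x = (volume C).toReal := by
    rw [setIntegral_congr_fun hCcomp.measurableSet hg1]
    simp
    rfl
  have hCfin : volume C ≠ ⊤ := hCcomp.measure_lt_top.ne
  have e2 : (volume S).toReal - ε ≤ (volume C).toReal := by
    have h1 : (volume S).toReal ≤ ((volume C) + ENNReal.ofReal ε).toReal :=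
      ENNReal.toReal_mono (by simp [hCfin]) hvolC.le
    rw [ENNReal.toReal_add hCfin ENNReal.ofReal_ne_top, ENNReal.toReal_ofReal hε.le] at h1
    linarith
  have e3 : ∫ x in C, g x ≤ ∫ x in A, g x := by
    apply setIntegral_mono_set intgA
    · exact Eventually.of_forall fun x => (hg01 x).1
    · exact ((hCS.trans Set.diff_subset) : C ⊆ A).eventuallyLE
  -- upper bound for ∫_B g
  have e4 : ∫ x in B, g x = ∫ x in B ∩ U, g x := by
    have hrepr : (fun x => g x) = U.indicator (fun x => g x) := by
      funext x
      by_cases hx : x ∈ U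
      · simp [Set.indicator_of_mem hx]
      · simp [Set.indicator_of_notMem hx, hg0 hx]
    conv_lhs => rw [hrepr]
    exact setIntegral_indicator hUopen.measurableSet
  have e5 : ∫ x in B ∩ U, g x ≤ (volume (B ∩ U)).toReal := by
    have h1 : ∫ x in B ∩ U, g x ≤ ∫ x in B ∩ U, (1:ℝ) := by
      apply setIntegral_mono_on (intgB.mono_set Set.inter_subset_left)
        (integrableOn_const ((measure_mono Set.inter_subset_left).trans_lt
          hB.measure_lt_top).ne)
        (hB.isClosed.measurableSet.inter hUopen.measurableSet)
      exact fun x _ => (hg01 x).2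
    exact (show _ ≤ volume.real (B ∩ U) by simpa using h1)
  have e6 : volume (B ∩ U) ≤ volume (U \ S) := by
    apply measure_mono
    rintro x ⟨hxB, hxU⟩
    exact ⟨hxU, fun hxS => hxS.2 hxB⟩
  have e7 : volume (U \ S) < ENNReal.ofReal ε := by
    have h8 : volume (U ∩ S) + volume (U \ S) = volume U := measure_inter_add_diff U hSmeas
    rw [Set.inter_eq_right.2 hSU] at h8
    rw [← h8] at hvolU
    exact (ENNReal.add_lt_add_iff_left hSfin).1 hvolU
  have e8 : ∫ x in B, g x ≤ ε := by
    rw [e4]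
    refine e5.trans ?_
    exact ENNReal.toReal_le_of_le_ofReal hε.le (e6.trans e7.le)
  have e9 : (volume S).toReal - ε ≤ ∫ x in A, g x := by
    calc (volume S).toReal - ε ≤ (volume C).toReal := e2
    _ = ∫ x in C, g x := e1.symm
    _ ≤ ∫ x in A, g x := e3
  linarith

lemma key_fn (A B : Set (EuclideanSpace ℝ (Fin n))) (hA : IsCompact A) (hB : IsCompact B)
    {ε : ℝ} (hε : 0 < ε) :
    ∃ f : BoundedContinuousFunction (EuclideanSpace ℝ (Fin n)) ℝ, ‖f‖ ≤ 1 ∧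
      (volume (symmDiff A B)).toReal - 4*ε ≤ (∫ x in A, f x) - ∫ x in B, f x := by
  obtain ⟨g₁, hc₁, h01₁, h₁⟩ := half_estimate A B hA hB hε
  obtain ⟨g₂, hc₂, h01₂, h₂⟩ := half_estimate B A hB hA hε
  have hbnd : ∀ x, ‖g₁ x - g₂ x‖ ≤ 1 := by
    intro x
    rw [Real.norm_eq_abs, abs_le]
    constructor
    · linarith [(h01₁ x).1, (h01₂ x).2]
    · linarith [(h01₁ x).2, (h01₂ x).1]
  refine ⟨BoundedContinuousFunction.ofNormedAddCommGroup (fun x => g₁ x - g₂ x)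
      (hc₁.sub hc₂) 1 hbnd,
    BoundedContinuousFunction.norm_ofNormedAddCommGroup_le _ zero_le_one _, ?_⟩
  have i₁A : IntegrableOn g₁ A volume := hc₁.continuousOn.integrableOn_compact hA
  have i₂A : IntegrableOn g₂ A volume := hc₂.continuousOn.integrableOn_compact hA
  have i₁B : IntegrableOn g₁ B volume := hc₁.continuousOn.integrableOn_compact hB
  have i₂B : IntegrableOn g₂ B volume := hc₂.continuousOn.integrableOn_compact hB
  have eA : ∫ x in A, (g₁ x - g₂ x) = (∫ x in A, g₁ x) - ∫ x in A, g₂ x :=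
    integral_sub i₁A i₂A
  have eB : ∫ x in B, (g₁ x - g₂ x) = (∫ x in B, g₁ x) - ∫ x in B, g₂ x :=
    integral_sub i₁B i₂B
  have hvol : (volume (symmDiff A B)).toReal
      = (volume (A \ B)).toReal + (volume (B \ A)).toReal := by
    rw [Set.symmDiff_def, measure_union (disjoint_sdiff_sdiff)
      (hB.isClosed.measurableSet.diff hA.isClosed.measurableSet)]
    rw [ENNReal.toReal_add
      (((measure_mono Set.diff_subset).trans_lt hA.measure_lt_top).ne)
      (((measure_mono Set.diff_subset).trans_lt hB.measure_lt_top).ne)]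
  simp only [BoundedContinuousFunction.coe_ofNormedAddCommGroup]
  rw [eA, eB, hvol]
  linarith

/-- Integration of bounded continuous functions over a compact set, as a CLM. -/
noncomputable def intCLM (s : Set (EuclideanSpace ℝ (Fin n))) (hs : IsCompact s) :
    BoundedContinuousFunction (EuclideanSpace ℝ (Fin n)) ℝ →L[ℝ] ℝ :=
  LinearMap.mkContinuous
    { toFun := fun f => ∫ x in s, f x
      map_add' := fun f g => integral_add
        (f.continuous.continuousOn.integrableOn_compact hs)
        (g.continuous.continuousOn.integrableOn_compact hs)
      map_smul' := fun c f => by simpa using integral_smul c (fun x => f x) }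
    (volume s).toReal
    (fun f => by
      rw [mul_comm]
      exact norm_setIntegral_le_of_norm_le_const
        (show volume s < ⊤ from hs.measure_lt_top)
        (fun x _ => f.norm_coe_le_norm x))

@[simp] lemma intCLM_apply (s : Set (EuclideanSpace ℝ (Fin n))) (hs : IsCompact s)
    (f : BoundedContinuousFunction (EuclideanSpace ℝ (Fin n)) ℝ) :
    intCLM s hs f = ∫ x in s, f x := rfl

end aux

theorem stmt14 (n : ℕ) (K : ℝ → Set (EuclideanSpace ℝ (Fin n)))
    (hbody : ∀ t ∈ Set.Icc (0 : ℝ) 1,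
      IsCompact (K t) ∧ Convex ℝ (K t) ∧ (interior (K t)).Nonempty)
    (hdiff : ∀ f : EuclideanSpace ℝ (Fin n) → ℝ, Continuous f → ∃ L : ℝ,
      Tendsto (fun t => ((∫ x in K t, f x) - ∫ x in K 0, f x) / t)
        (nhdsWithin 0 (Set.Ioi 0)) (nhds L)) :
    (∃ C : ℝ, ∀ᶠ t in nhdsWithin (0 : ℝ) (Set.Ioi 0),
        (volume (symmDiff (K t) (K 0))).toReal ≤ C * t) ∧
      Tendsto (fun t => volume (symmDiff (K t) (K 0)))
        (nhdsWithin (0 : ℝ) (Set.Ioi 0)) (nhds 0) := by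
  have hK0 : IsCompact (K 0) := (hbody 0 ⟨le_refl 0, zero_le_one⟩).1
  have main : ∃ C : ℝ, ∀ᶠ t in nhdsWithin (0:ℝ) (Set.Ioi 0),
      (volume (symmDiff (K t) (K 0))).toReal ≤ C * t := by
    by_contra hcon
    push_neg at hcon
    have hseq : ∀ k : ℕ, ∃ s : ℝ, s ∈ Set.Ioo (0:ℝ) (1/(k+1)) ∧
        (k:ℝ) * s < (volume (symmDiff (K s) (K 0))).toReal := by
      intro k
      have h1 : Set.Ioo (0:ℝ) (1/(k+1)) ∈ nhdsWithin (0:ℝ) (Set.Ioi 0) :=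
        Ioo_mem_nhdsGT_of_mem ⟨le_refl 0, by positivity⟩
      have h2 : ∃ᶠ s in nhdsWithin (0:ℝ) (Set.Ioi 0),
          (k:ℝ) * s < (volume (symmDiff (K s) (K 0))).toReal := by
        simpa [not_le] using (hcon k)
      exact ((h2.and_eventually (eventually_mem_set.2 h1)).exists).imp
        (fun s hs => ⟨hs.2, hs.1⟩)
    choose t ht hlt using hseq
    have htpos : ∀ k, 0 < t k := fun k => (ht k).1
    have htmem : ∀ k, t k ∈ Set.Icc (0:ℝ) 1 := by
      intro k
      refine ⟨(htpos k).le, ((ht k).2.le.trans ?_)⟩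
      rw [div_le_one (by positivity)]
      simp
    have htto : Tendsto t atTop (nhdsWithin (0:ℝ) (Set.Ioi 0)) := by
      apply tendsto_nhdsWithin_of_tendsto_nhds_of_eventually_within
      · apply tendsto_of_tendsto_of_tendsto_of_le_of_le
          (tendsto_const_nhds (x := (0:ℝ))) tendsto_one_div_add_atTop_nhds_zero_nat
          (fun k => (htpos k).le) (fun k => (ht k).2.le)
      · exact Eventually.of_forall fun k => htpos k
    have hKt : ∀ k, IsCompact (K (t k)) := fun k => (hbody (t k) (htmem k)).1
    set T : ℕ → (BoundedContinuousFunction (EuclideanSpace ℝ (Fin n)) ℝ →L[ℝ] ℝ) :=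
      fun k => (t k)⁻¹ • (intCLM _ (hKt k) - intCLM _ hK0) with hT
    have hTapp : ∀ k (f : BoundedContinuousFunction (EuclideanSpace ℝ (Fin n)) ℝ),
        T k f = ((∫ x in K (t k), f x) - ∫ x in K 0, f x) / t k := by
      intro k f
      simp [hT, div_eq_inv_mul]
    have hpt : ∀ f : BoundedContinuousFunction (EuclideanSpace ℝ (Fin n)) ℝ,
        ∃ C, ∀ k, ‖T k f‖ ≤ C := by
      intro f
      obtain ⟨L, hL⟩ := hdiff f f.continuous
      have h2 : Tendsto (fun k => T k f) atTop (nhds L) := by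
        have h3 := hL.comp htto
        simp only [Function.comp_def] at h3
        simpa [hTapp] using h3
      obtain ⟨C, hC⟩ := h2.norm.bddAbove_range
      exact ⟨C, fun k => hC ⟨k, rfl⟩⟩
    obtain ⟨C', hC'⟩ := banach_steinhaus hpt
    obtain ⟨k, hk⟩ := exists_nat_gt (C' + 4)
    obtain ⟨f, hf1, hfest⟩ := key_fn (K (t k)) (K 0) (hKt k) hK0 (htpos k)
    have h6 : ((volume (symmDiff (K (t k)) (K 0))).toReal - 4 * t k) / t k ≤ T k f := by
      rw [hTapp k f]
      exact div_le_div_of_nonneg_right hfest (htpos k).le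
    have h7 : (k:ℝ) - 4 < ((volume (symmDiff (K (t k)) (K 0))).toReal - 4 * t k) / t k := by
      rw [lt_div_iff₀ (htpos k)]
      have := hlt k
      ring_nf
      nlinarith [htpos k]
    have h8 : T k f ≤ C' := by
      calc T k f ≤ ‖T k f‖ := le_abs_self _
      _ ≤ ‖T k‖ * ‖f‖ := (T k).le_opNorm f
      _ ≤ C' * 1 := mul_le_mul (hC' k) hf1 (norm_nonneg _)
          ((norm_nonneg (T k)).trans (hC' k))
      _ = C' := mul_one _
    linarith
  refine ⟨main, ?_⟩
  obtain ⟨C, hC⟩ := main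
  have hfin : ∀ᶠ s in nhdsWithin (0:ℝ) (Set.Ioi 0),
      volume (symmDiff (K s) (K 0)) ≠ ⊤ := by
    filter_upwards [eventually_mem_set.2 (Ioo_mem_nhdsGT_of_mem
      (⟨le_refl 0, zero_lt_one⟩ : (0:ℝ) ∈ Set.Ico (0:ℝ) 1))] with s hs
    have hKs : IsCompact (K s) := (hbody s ⟨hs.1.le, hs.2.le⟩).1
    have : symmDiff (K s) (K 0) ⊆ K s ∪ K 0 := symmDiff_le_sup
    exact ((measure_mono this).trans_lt (hKs.union hK0).measure_lt_top).ne
  have h2 : ∀ᶠ s in nhdsWithin (0:ℝ) (Set.Ioi 0),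
      volume (symmDiff (K s) (K 0)) ≤ ENNReal.ofReal (C * s) := by
    filter_upwards [hC, hfin] with s h1 h2'
    rw [← ENNReal.ofReal_toReal h2']
    exact ENNReal.ofReal_le_ofReal h1
  have h3 : Tendsto (fun s : ℝ => ENNReal.ofReal (C * s))
      (nhdsWithin (0:ℝ) (Set.Ioi 0)) (nhds 0) := by
    have h4 : Tendsto (fun s : ℝ => C * s) (nhdsWithin (0:ℝ) (Set.Ioi 0)) (nhds 0) := by
      have h5 := (continuous_id.tendsto (0:ℝ)).const_mul C
      simp only [mul_zero, id] at h5
      exact h5.mono_left nhdsWithin_le_nhds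
    simpa using ENNReal.tendsto_ofReal h4
  exact tendsto_of_tendsto_of_tendsto_of_le_of_le' tendsto_const_nhds h3
    (Eventually.of_forall fun s => zero_le) h2
end

section
/- Let P ⊆ ℝⁿ be a compact convex polytope and α ∈ (0,1]. Let f : relint P → [0,∞) be an integrable function such that f^α is convex. Then for every ε > 0 there exists a piecewise affine convex function g : relint P → ℝ (a finite maximum of affine functionals, truncated at 0 when α < 1) such that ∫_{relint P} |f(x) − g(x)^{1/α}| dx < ε. -/
open MeasureTheory Set Metric Bornology

section aux

variable {E : Type*} [NormedAddCommGroup E] [NormedSpace ℝ E]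

lemma affineContinuous [FiniteDimensional ℝ E] (φ : E →ᵃ[ℝ] ℝ) : Continuous φ := by
  have h : (φ : E → ℝ) = fun x => φ.linear x + φ 0 := by
    funext x
    have := φ.map_vadd (0 : E) x
    simpa [vadd_eq_add] using this
  rw [h]
  exact (φ.linear.continuous_of_finiteDimensional).add continuous_const

lemma continuous_finsetSup' [FiniteDimensional ℝ E] (H : Finset (E →ᵃ[ℝ] ℝ)) (hne : H.Nonempty) :
    Continuous fun x => H.sup' hne fun h => h x := by
  induction hne using Finset.Nonempty.cons_induction with
  | singleton a =>
      simp only [Finset.sup'_singleton]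
      exact affineContinuous a
  | cons a s ha hs ih =>
      simp only [Finset.sup'_cons hs]
      exact (affineContinuous a).sup ih

lemma exists_affine_support {F : Type*} [NormedAddCommGroup F] [NormedSpace ℝ F]
    {U : Set F} (hU : IsOpen U) {Φ : F → ℝ} (hΦ : ConvexOn ℝ U Φ)
    (hcont : ContinuousOn Φ U) {x : F} (hx : x ∈ U) :
    ∃ h : F →ᵃ[ℝ] ℝ, h x = Φ x ∧ ∀ y ∈ U, h y ≤ Φ y := by
  set S : Set (F × ℝ) := {p | p.1 ∈ U ∧ Φ p.1 < p.2} with hS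
  have hSopen : IsOpen S := by
    rw [isOpen_iff_mem_nhds]
    rintro ⟨y, t⟩ ⟨hyU, hyt⟩
    have h1 : {p : F × ℝ | p.1 ∈ U} ∈ nhds ((y, t) : F × ℝ) :=
      continuous_fst.continuousAt.preimage_mem_nhds (hU.mem_nhds hyU)
    have hcy : ContinuousAt Φ y := hcont.continuousAt (hU.mem_nhds hyU)
    have h2 : {p : F × ℝ | Φ p.1 < p.2} ∈ nhds ((y, t) : F × ℝ) :=
      (hcy.comp continuous_fst.continuousAt).eventually_lt continuous_snd.continuousAt hyt
    exact Filter.inter_mem h1 h2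
  have hSconv : Convex ℝ S := by
    rintro ⟨y, t⟩ ⟨hyU, hyt⟩ ⟨z, u⟩ ⟨hzU, hzu⟩ a b ha hb hab
    refine ⟨hΦ.1 hyU hzU ha hb hab, ?_⟩
    have h1 := hΦ.2 hyU hzU ha hb hab
    simp only [smul_eq_mul, Prod.fst_add, Prod.smul_fst, Prod.snd_add, Prod.smul_snd,
      smul_eq_mul] at h1 ⊢
    rcases eq_or_lt_of_le ha with h | h
    · have hb1 : b = 1 := by linarith
      subst hb1
      simp only [← h, zero_mul, zero_add, one_mul, zero_smul, one_smul] at h1 ⊢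
      exact lt_of_le_of_lt h1 hzu
    · calc Φ (a • y + b • z) ≤ a * Φ y + b * Φ z := h1
        _ < a * t + b * u :=
          add_lt_add_of_lt_of_le ((mul_lt_mul_iff_right₀ h).2 hyt)
            (mul_le_mul_of_nonneg_left hzu.le hb)
  have hxS : ((x, Φ x) : F × ℝ) ∉ S := fun h => lt_irrefl _ h.2
  obtain ⟨ℓ, hℓ⟩ := geometric_hahn_banach_open_point hSconv hSopen hxS
  set c : ℝ := ℓ (0, 1) with hc
  have hdec : ∀ (y : F) (t : ℝ), ℓ (y, t) = ℓ (y, 0) + t * c := by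
    intro y t
    have h1 : ((y, t) : F × ℝ) = (y, 0) + t • ((0 : F), (1 : ℝ)) := by
      simp [Prod.ext_iff]
    rw [h1, map_add, ℓ.map_smul, smul_eq_mul]
  have key : ∀ y ∈ U, ∀ t, Φ y < t → ℓ (y, 0) + t * c < ℓ (x, 0) + Φ x * c := by
    intro y hy t ht
    have h := hℓ (y, t) ⟨hy, ht⟩
    rwa [hdec y t, hdec x (Φ x)] at h
  have hcneg : c < 0 := by
    have := key x hx (Φ x + 1) (by linarith)
    nlinarith
  have hineq : ∀ y ∈ U, ℓ (y, 0) + Φ y * c ≤ ℓ (x, 0) + Φ x * c := by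
    intro y hy
    by_contra hcon
    push_neg at hcon
    set η : ℝ := (ℓ (y, 0) + Φ y * c - (ℓ (x, 0) + Φ x * c)) / 2 with hη
    have hηpos : 0 < η := by rw [hη]; linarith
    have := key y hy (Φ y + η / (-c)) (by
      have : 0 < η / (-c) := div_pos hηpos (by linarith)
      linarith)
    have hc0 : c ≠ 0 := ne_of_lt hcneg
    have hc' : (η / (-c)) * c = -η := by
      field_simp
    nlinarith
  set ℓ1 : F →ₗ[ℝ] ℝ := ℓ.toLinearMap.comp (LinearMap.inl ℝ F ℝ) with hℓ1
  have hℓ1a : ∀ y, ℓ1 y = ℓ (y, 0) := fun y => rfl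
  refine ⟨AffineMap.mk' (fun y => Φ x + (ℓ1 x - ℓ1 y) / c) ((-c⁻¹) • ℓ1) x ?_, ?_, ?_⟩
  · intro p
    simp only [LinearMap.smul_apply, map_sub, smul_eq_mul, vadd_eq_add]
    field_simp
    rw [vsub_eq_sub, map_sub]
    ring
  · simp [AffineMap.coe_mk']
  · intro y hy
    rw [AffineMap.coe_mk']
    have h2 := hineq y hy
    rw [← hℓ1a, ← hℓ1a] at h2
    have h3 : (ℓ1 x - ℓ1 y) / c ≤ Φ y - Φ x := by
      rw [div_le_iff_of_neg hcneg]
      nlinarith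
    linarith

lemma hausdorff_lt_top_of_isBounded {d : ℕ} {T : Set (EuclideanSpace ℝ (Fin d))}
    (hT : IsBounded T) : μH[(d : ℝ)] T < ⊤ := by
  set φ : (Fin d → ℝ) → EuclideanSpace ℝ (Fin d) := ⇑(WithLp.equiv 2 (Fin d → ℝ)).symm with hφ
  have hlip : LipschitzWith ((Fintype.card (Fin d) : NNReal) ^ ((1 : ENNReal) / 2).toReal) φ :=
    PiLp.lipschitzWith_toLp 2 (fun _ : Fin d => ℝ)
  have himg : T = φ '' (φ ⁻¹' T) := by
    rw [Set.image_preimage_eq]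
    exact (WithLp.equiv 2 (Fin d → ℝ)).symm.surjective
  have hpre : IsBounded (φ ⁻¹' T) := by
    have h1 : φ ⁻¹' T = ⇑(WithLp.equiv 2 (Fin d → ℝ)) '' T := by
      rw [hφ, ← Equiv.image_eq_preimage_symm]
    rw [h1]
    exact (PiLp.lipschitzWith_ofLp 2 (fun _ : Fin d => ℝ)).isBounded_image hT
  obtain ⟨R, hR⟩ := hpre.subset_closedBall 0
  have hpi : μH[(d : ℝ)] (φ ⁻¹' T) < ⊤ := by
    have hcast : ((Fintype.card (Fin d) : ℝ)) = (d : ℝ) := by simp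
    have h2 : (μH[(d : ℝ)] : Measure (Fin d → ℝ)) = volume := by
      rw [← hcast]; exact hausdorffMeasure_pi_real
    rw [h2]
    exact lt_of_le_of_lt (measure_mono hR) (isCompact_closedBall 0 R).measure_lt_top
  have hle := hlip.hausdorffMeasure_image_le (d := (d : ℝ)) (Nat.cast_nonneg d) (φ ⁻¹' T)
  rw [← himg] at hle
  exact lt_of_le_of_lt hle
    (ENNReal.mul_lt_top (ENNReal.rpow_lt_top_of_nonneg (Nat.cast_nonneg d) ENNReal.coe_ne_top) hpi)

end aux


set_option maxHeartbeats 2000000 in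
theorem stmt17 (n : ℕ) (P : Set (EuclideanSpace ℝ (Fin n)))
    (hPpoly : ∃ S : Finset (EuclideanSpace ℝ (Fin n)), P = convexHull ℝ (S : Set _))
    (α : ℝ) (hα : α ∈ Set.Ioc (0 : ℝ) 1)
    (f : EuclideanSpace ℝ (Fin n) → ℝ)
    (hf0 : ∀ x ∈ intrinsicInterior ℝ P, 0 ≤ f x)
    (hfconv : ConvexOn ℝ (intrinsicInterior ℝ P) (fun x => f x ^ α))
    (hint : IntegrableOn f (intrinsicInterior ℝ P)
      (μH[(Module.finrank ℝ (affineSpan ℝ P).direction : ℝ)]))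
    (ε : ℝ) (hε : 0 < ε) :
    ∃ (H : Finset (EuclideanSpace ℝ (Fin n) →ᵃ[ℝ] ℝ)) (hne : H.Nonempty),
      (α < 1 → ∀ x ∈ intrinsicInterior ℝ P, 0 ≤ H.sup' hne (fun h => h x)) ∧
      (∫ x in intrinsicInterior ℝ P, |f x - (H.sup' hne (fun h => h x)) ^ (1 / α)|
        ∂(μH[(Module.finrank ℝ (affineSpan ℝ P).direction : ℝ)])) < ε := by
  classical
  by_cases hsE : intrinsicInterior ℝ P = ∅
  · refine ⟨{0}, ⟨0, Finset.mem_singleton_self 0⟩, ?_, ?_⟩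
    · intro _ x hx
      rw [hsE] at hx
      exact absurd hx (Set.notMem_empty x)
    · rw [hsE]
      simpa [Measure.restrict_empty] using hε
  obtain ⟨x₀, hx₀⟩ := Set.nonempty_iff_ne_empty.2 hsE
  obtain ⟨S0, hS0⟩ := hPpoly
  have hPconv : Convex ℝ P := hS0 ▸ convex_convexHull ℝ _
  have hPbd : IsBounded P := hS0 ▸ (S0.finite_toSet.isCompact_convexHull (𝕜 := ℝ)).isBounded
  set s : Set (EuclideanSpace ℝ (Fin n)) := intrinsicInterior ℝ P with hs_def
  set A : AffineSubspace ℝ (EuclideanSpace ℝ (Fin n)) := affineSpan ℝ P with hA_def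
  set V : Submodule ℝ (EuclideanSpace ℝ (Fin n)) := A.direction with hV_def
  set d : ℕ := Module.finrank ℝ V with hd_def
  set μ : Measure (EuclideanSpace ℝ (Fin n)) := μH[(d : ℝ)] with hμ_def
  have hx₀P : x₀ ∈ P := intrinsicInterior_subset hx₀
  have hx₀A : x₀ ∈ A := subset_affineSpan ℝ P hx₀P
  have hsP : s ⊆ P := intrinsicInterior_subset
  have hsA : s ⊆ (A : Set _) := fun x hx => subset_affineSpan ℝ P (hsP hx)
  -- the isometric parametrization `e` of the affine span and its inverse `π`
  set L : EuclideanSpace ℝ (Fin d) ≃ₗᵢ[ℝ] V := (stdOrthonormalBasis ℝ V).repr.symm with hL_def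
  set e : EuclideanSpace ℝ (Fin d) →ᵃ[ℝ] EuclideanSpace ℝ (Fin n) :=
    AffineMap.mk' (fun v => (L v : EuclideanSpace ℝ (Fin n)) + x₀)
      (V.subtype ∘ₗ (L.toLinearEquiv : EuclideanSpace ℝ (Fin d) →ₗ[ℝ] V)) 0
      (by
        intro p
        simp [vadd_eq_add]) with he_def
  have he_apply : ∀ v, e v = (L v : EuclideanSpace ℝ (Fin n)) + x₀ := fun v => by
    rw [he_def, AffineMap.coe_mk']
  set π : EuclideanSpace ℝ (Fin n) →ᵃ[ℝ] EuclideanSpace ℝ (Fin d) :=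
    AffineMap.mk' (fun x => L.symm ((V.orthogonalProjectionOnto) (x - x₀)))
      ((L.symm.toLinearEquiv : V →ₗ[ℝ] EuclideanSpace ℝ (Fin d)) ∘ₗ
        (V.orthogonalProjectionOnto).toLinearMap) x₀
      (by
        intro p
        simp [vsub_eq_sub, vadd_eq_add]) with hπ_def
  have hπ_apply : ∀ x, π x = L.symm ((V.orthogonalProjectionOnto) (x - x₀)) := fun x => by
    rw [hπ_def, AffineMap.coe_mk']
  have hπe : ∀ v, π (e v) = v := by
    intro v
    rw [hπ_apply, he_apply, add_sub_cancel_right]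
    rw [Submodule.orthogonalProjectionOnto_mem_subspace_eq_self (L v)]
    exact L.symm_apply_apply v
  have heπ : ∀ x ∈ A, e (π x) = x := by
    intro x hx
    rw [hπ_apply, he_apply, L.apply_symm_apply]
    have hxV : x - x₀ ∈ V := by
      have := AffineSubspace.vsub_mem_direction hx hx₀A
      simpa [vsub_eq_sub] using this
    rw [show ((V.orthogonalProjectionOnto (x - x₀) : V) : EuclideanSpace ℝ (Fin n)) = x - x₀ from
      V.starProjection_eq_self_iff.2 hxV]
    abel
  have heA : ∀ v, e v ∈ A := by
    intro v
    rw [he_apply]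
    have : ((L v : EuclideanSpace ℝ (Fin n)) + x₀) = (L v : EuclideanSpace ℝ (Fin n)) +ᵥ x₀ := rfl
    rw [this]
    exact AffineSubspace.vadd_mem_of_mem_direction (L v).2 hx₀A
  have he_isom : Isometry ⇑e := by
    apply Isometry.of_dist_eq
    intro u v
    rw [he_apply, he_apply, dist_eq_norm, dist_eq_norm]
    have : (L u : EuclideanSpace ℝ (Fin n)) + x₀ - ((L v : EuclideanSpace ℝ (Fin n)) + x₀)
        = ((L u - L v : V) : EuclideanSpace ℝ (Fin n)) := by
      push_cast
      abel
    rw [this]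
    rw [show ((L u - L v : V) : EuclideanSpace ℝ (Fin n)) = ((L (u - v) : V) : _) by
      rw [map_sub]]
    rw [Submodule.norm_coe, L.norm_map]
  have he_cont : Continuous ⇑e := he_isom.continuous
  have hπ_cont : Continuous ⇑π := by
    rw [hπ_def, AffineMap.coe_mk']
    exact L.symm.continuous.comp
      ((V.orthogonalProjectionOnto).continuous.comp (continuous_id.sub continuous_const))
  -- the preimage of the intrinsic interior is the interior of the preimage
  set s' : Set (EuclideanSpace ℝ (Fin d)) := ⇑e ⁻¹' s with hs'_def
  have hs'_eq : s' = interior (⇑e ⁻¹' P) := by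
    apply Set.Subset.antisymm
    · intro v hv
      have hev : e v ∈ s := hv
      rw [hs_def, mem_intrinsicInterior] at hev
      obtain ⟨y, hy, hyev⟩ := hev
      rw [mem_interior_iff_mem_nhds, nhds_subtype, Filter.mem_comap] at hy
      obtain ⟨W, hW, hWP⟩ := hy
      rw [hyev] at hW
      rw [mem_interior_iff_mem_nhds]
      have h1 : ⇑e ⁻¹' W ∈ nhds v := he_cont.continuousAt.preimage_mem_nhds hW
      refine Filter.mem_of_superset h1 ?_
      intro z hz
      exact hWP (show ((⟨e z, heA z⟩ : affineSpan ℝ P) : EuclideanSpace ℝ (Fin n)) ∈ W from hz)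
    · intro v hv
      have hevP' : v ∈ ⇑e ⁻¹' P := interior_subset hv
      have hevP : e v ∈ P := hevP'
      have hevA : e v ∈ affineSpan ℝ P := subset_affineSpan ℝ P hevP
      show e v ∈ s
      rw [hs_def, mem_intrinsicInterior]
      refine ⟨⟨e v, hevA⟩, ?_, rfl⟩
      rw [mem_interior_iff_mem_nhds, nhds_subtype, Filter.mem_comap]
      refine ⟨⇑π ⁻¹' interior (⇑e ⁻¹' P), hπ_cont.continuousAt.preimage_mem_nhds ?_, ?_⟩
      · rw [show π ((⟨e v, hevA⟩ : affineSpan ℝ P) : EuclideanSpace ℝ (Fin n)) = v from hπe v]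
        exact isOpen_interior.mem_nhds hv
      · rintro ⟨z, hzA⟩ hz
        have h2 : π z ∈ ⇑e ⁻¹' P := interior_subset hz
        have h3 : e (π z) = z := heπ z hzA
        show z ∈ P
        rw [← h3]
        exact h2
  have hs'open : IsOpen s' := hs'_eq ▸ isOpen_interior
  have hsimg : ⇑e '' s' = s := by
    rw [hs'_def]
    apply Set.image_preimage_eq_of_subset
    intro x hx
    exact ⟨π x, heπ x (hsA hx)⟩
  have hmE : MeasurableEmbedding ⇑e := (he_isom.isClosedEmbedding).measurableEmbedding
  have hsmeas : MeasurableSet s := by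
    rw [← hsimg]
    exact hmE.measurableSet_image.2 hs'open.measurableSet
  set Φ : EuclideanSpace ℝ (Fin d) → ℝ := (fun x => f x ^ α) ∘ ⇑e with hΦ_def
  have hΦconv : ConvexOn ℝ s' Φ := hfconv.comp_affineMap e
  have hΦcont : ContinuousOn Φ s' := hΦconv.continuousOn hs'open
  obtain ⟨R, hR⟩ := hPbd.subset_closedBall x₀
  set v₀ : EuclideanSpace ℝ (Fin d) := π x₀ with hv₀_def
  have hev₀ : e v₀ = x₀ := heπ x₀ hx₀A
  have hv₀s' : v₀ ∈ s' := by rw [hs'_def, Set.mem_preimage, hev₀]; exact hx₀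
  have hs'bd : s' ⊆ closedBall v₀ R := by
    intro v hv
    have h1 : e v ∈ P := hsP hv
    have h2 : dist (e v) x₀ ≤ R := mem_closedBall.1 (hR h1)
    rw [← hev₀] at h2
    rw [mem_closedBall]
    calc dist v v₀ = dist (e v) (e v₀) := (he_isom.dist_eq v v₀).symm
      _ ≤ R := h2
  -- compact exhaustion of `s'`
  set KK : ℕ → Set (EuclideanSpace ℝ (Fin d)) := fun m =>
    {v | ∀ w, w ∉ s' → ((m : ℝ) + 1)⁻¹ ≤ dist v w} ∩ closedBall v₀ R with hKK_def
  have hKKsub : ∀ m, KK m ⊆ s' := by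
    intro m v hv
    by_contra hvs
    have h1 := hv.1 v hvs
    rw [dist_self] at h1
    have h2 : (0 : ℝ) < ((m : ℝ) + 1)⁻¹ := by positivity
    linarith
  have hKKcomp : ∀ m, IsCompact (KK m) := by
    intro m
    apply (isCompact_closedBall v₀ R).of_isClosed_subset ?_ Set.inter_subset_right
    apply IsClosed.inter ?_ isClosed_closedBall
    have h1 : {v : EuclideanSpace ℝ (Fin d) | ∀ w, w ∉ s' → ((m : ℝ) + 1)⁻¹ ≤ dist v w}
        = ⋂ (w) (_ : w ∉ s'), {v | ((m : ℝ) + 1)⁻¹ ≤ dist v w} := by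
      ext v
      simp [Set.mem_iInter]
    rw [h1]
    exact isClosed_iInter fun w => isClosed_iInter fun _ =>
      isClosed_le continuous_const (continuous_id.dist continuous_const)
  have hKKmono : Monotone KK := by
    intro m m' hmm v hv
    refine ⟨fun w hw => le_trans ?_ (hv.1 w hw), hv.2⟩
    apply inv_anti₀ (by positivity)
    have : (m : ℝ) ≤ (m' : ℝ) := Nat.cast_le.2 hmm
    linarith
  have hKKunion : (⋃ m, KK m) = s' := by
    apply Set.Subset.antisymm (Set.iUnion_subset hKKsub)
    intro v hv
    obtain ⟨r, hr, hball⟩ := Metric.isOpen_iff.1 hs'open v hv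
    obtain ⟨m, hm⟩ := exists_nat_one_div_lt hr
    rw [Set.mem_iUnion]
    refine ⟨m, ⟨fun w hw => ?_, hs'bd hv⟩⟩
    rw [one_div] at hm
    have h3 : r ≤ dist v w := by
      by_contra hcon
      push_neg at hcon
      exact hw (hball (by rwa [mem_ball, dist_comm]))
    linarith
  -- choice of the compact piece `K`
  set Am : ℕ → Set (EuclideanSpace ℝ (Fin n)) := fun m => ⇑e '' KK m with hAm_def
  have hAmcomp : ∀ m, IsCompact (Am m) := fun m => ((hKKcomp m).image he_cont)
  have hAmmeas : ∀ m, MeasurableSet (Am m) := fun m => (hAmcomp m).isClosed.measurableSet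
  have hAmmono : Monotone Am := fun m m' h => Set.image_mono (hKKmono h)
  have hAmunion : (⋃ m, Am m) = s := by
    rw [hAm_def, ← Set.image_iUnion, hKKunion, hsimg]
  have htend := tendsto_setIntegral_of_monotone hAmmeas hAmmono (by rw [hAmunion]; exact hint)
  rw [hAmunion] at htend
  obtain ⟨N, hN⟩ := (Metric.tendsto_atTop.1 htend) (ε / 2) (half_pos hε)
  have hNd := hN N le_rfl
  set K : Set (EuclideanSpace ℝ (Fin n)) := Am N with hK_def
  set K' : Set (EuclideanSpace ℝ (Fin d)) := KK N with hK'_def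
  have hK'comp : IsCompact K' := hKKcomp N
  have hK'sub : K' ⊆ s' := hKKsub N
  have hKs : K ⊆ s := by
    rw [hK_def, hAm_def, ← hsimg]
    exact Set.image_mono (hKKsub N)
  have hKmeas : MeasurableSet K := hAmmeas N
  have hμK : μ K < ⊤ := by
    rw [hK_def, hAm_def, hμ_def, he_isom.hausdorffMeasure_image (Or.inl (Nat.cast_nonneg d))]
    exact hausdorff_lt_top_of_isBounded (hKKcomp N).isBounded
  have htail : ∫ x in s \ K, f x ∂μ < ε / 2 := by
    rw [integral_diff hKmeas hint hKs]
    have h1 : dist (∫ x in K, f x ∂μ) (∫ x in s, f x ∂μ) < ε / 2 := hNd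
    rw [Real.dist_eq] at h1
    have h2 := abs_lt.1 h1
    linarith [h2.1]
  -- numerical constants
  set ε'' : ℝ := (ε / 2) / ((μ K).toReal + 1) with hε''_def
  have hε''pos : 0 < ε'' := div_pos (half_pos hε) (by positivity)
  obtain ⟨M₀, hM₀⟩ := hK'comp.bddAbove_image (hΦcont.mono hK'sub)
  set M : ℝ := max M₀ 0 with hM_def
  have hM : ∀ v ∈ K', Φ v ≤ M :=
    fun v hv => le_trans (hM₀ (Set.mem_image_of_mem Φ hv)) (le_max_left _ _)
  set ψ : ℝ → ℝ := fun t => t ^ (1 / α) with hψ_def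
  have hαinv : 0 < 1 / α := one_div_pos.2 hα.1
  have hψcont : Continuous ψ := by
    rw [continuous_iff_continuousAt]
    intro t
    exact Real.continuousAt_rpow_const t (1 / α) (Or.inr hαinv.le)
  obtain ⟨δ, hδpos, hδ⟩ := Metric.uniformContinuousOn_iff.1
    ((isCompact_Icc : IsCompact (Set.Icc (0 : ℝ) M)).uniformContinuousOn_of_continuous
      hψcont.continuousOn) ε'' hε''pos
  -- supporting affine functionals and the finite covering
  have hsupport : ∀ v ∈ s', ∃ h : EuclideanSpace ℝ (Fin d) →ᵃ[ℝ] ℝ,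
      h v = Φ v ∧ ∀ y ∈ s', h y ≤ Φ y :=
    fun v hv => exists_affine_support hs'open hΦconv hΦcont hv
  set hsup : {v // v ∈ K'} → (EuclideanSpace ℝ (Fin d) →ᵃ[ℝ] ℝ) :=
    fun v => (hsupport v.1 (hK'sub v.2)).choose with hsup_def
  have hsup_eq : ∀ v : {v // v ∈ K'}, hsup v v.1 = Φ v.1 :=
    fun v => (hsupport v.1 (hK'sub v.2)).choose_spec.1
  have hsup_le : ∀ v : {v // v ∈ K'}, ∀ y ∈ s', hsup v y ≤ Φ y :=
    fun v => (hsupport v.1 (hK'sub v.2)).choose_spec.2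
  set U : {v // v ∈ K'} → Set (EuclideanSpace ℝ (Fin d)) :=
    fun i => {y | y ∈ s' ∧ Φ y - hsup i y < δ} with hU_def
  have hUopen : ∀ i, IsOpen (U i) := by
    intro i
    rw [isOpen_iff_mem_nhds]
    intro y hy
    have h1 : s' ∈ nhds y := hs'open.mem_nhds hy.1
    have h2 : {z | Φ z - hsup i z < δ} ∈ nhds y := by
      have hca : ContinuousAt (fun z => Φ z - hsup i z) y :=
        (hΦcont.continuousAt (hs'open.mem_nhds hy.1)).sub
          (affineContinuous (hsup i)).continuousAt
      exact hca.eventually_lt continuousAt_const hy.2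
    exact Filter.mem_of_superset (Filter.inter_mem h1 h2) (fun z hz => ⟨hz.1, hz.2⟩)
  have hUcover : K' ⊆ ⋃ i, U i := by
    intro v hv
    rw [Set.mem_iUnion]
    refine ⟨⟨v, hv⟩, hK'sub hv, ?_⟩
    rw [hsup_eq ⟨v, hv⟩]
    simpa using hδpos
  obtain ⟨t, ht⟩ := hK'comp.elim_finite_subcover U hUopen hUcover
  -- the piecewise affine function
  set H : Finset (EuclideanSpace ℝ (Fin n) →ᵃ[ℝ] ℝ) :=
    insert 0 (t.image fun i => (hsup i).comp π) with hH_def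
  have hne : H.Nonempty := ⟨0, Finset.mem_insert_self 0 _⟩
  set g : EuclideanSpace ℝ (Fin n) → ℝ := fun x => H.sup' hne fun h => h x with hg_def
  have hg0 : ∀ x, 0 ≤ g x := by
    intro x
    have h1 := Finset.le_sup' (fun h : EuclideanSpace ℝ (Fin n) →ᵃ[ℝ] ℝ => h x)
      (Finset.mem_insert_self 0 (t.image fun i => (hsup i).comp π))
    simp only [AffineMap.coe_zero, Pi.zero_apply] at h1
    exact h1
  have hπs' : ∀ x ∈ s, π x ∈ s' := by
    intro x hx
    rw [hs'_def, Set.mem_preimage, heπ x (hsA hx)]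
    exact hx
  have hgle : ∀ x ∈ s, g x ≤ f x ^ α := by
    intro x hx
    apply Finset.sup'_le
    intro h hh
    rcases Finset.mem_insert.1 hh with rfl | hh
    · simpa using Real.rpow_nonneg (hf0 x hx) α
    · obtain ⟨i, hit, rfl⟩ := Finset.mem_image.1 hh
      rw [AffineMap.comp_apply]
      have h1 := hsup_le i (π x) (hπs' x hx)
      rw [hΦ_def] at h1
      simp only [Function.comp_apply] at h1
      rwa [heπ x (hsA hx)] at h1
  have hrpow_inv : ∀ x ∈ s, (f x ^ α) ^ (1 / α) = f x := by
    intro x hx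
    rw [← Real.rpow_mul (hf0 x hx), mul_one_div, div_self (ne_of_gt hα.1), Real.rpow_one]
  have hψgle : ∀ x ∈ s, ψ (g x) ≤ f x := by
    intro x hx
    have h2 : (g x) ^ (1 / α) ≤ (f x ^ α) ^ (1 / α) :=
      Real.rpow_le_rpow (hg0 x) (hgle x hx) (le_of_lt hαinv)
    calc ψ (g x) ≤ (f x ^ α) ^ (1 / α) := h2
      _ = f x := hrpow_inv x hx
  have hψg0 : ∀ x, 0 ≤ ψ (g x) := fun x => Real.rpow_nonneg (hg0 x) _
  -- the key closeness estimate on K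
  have hclose : ∀ x ∈ K, |f x - ψ (g x)| ≤ ε'' := by
    intro x hx
    have hxs : x ∈ s := hKs hx
    rw [hK_def, hAm_def] at hx
    obtain ⟨v, hvK', rfl⟩ := hx
    have ha : Φ v = f (e v) ^ α := rfl
    set a : ℝ := Φ v with ha_def
    set b : ℝ := g (e v) with hb_def
    have hb_le : b ≤ a := by rw [hb_def, ha]; exact hgle (e v) hxs
    have hb_gt : a - δ < b := by
      obtain ⟨i, hit, hiU⟩ := Set.mem_iUnion₂.1 (ht hvK')
      have hmem : ((hsup i).comp π) ∈ H := by
        rw [hH_def]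
        exact Finset.mem_insert_of_mem (Finset.mem_image_of_mem _ hit)
      have h1 : ((hsup i).comp π) (e v) ≤ b :=
        Finset.le_sup' (fun h : EuclideanSpace ℝ (Fin n) →ᵃ[ℝ] ℝ => h (e v)) hmem
      rw [AffineMap.comp_apply, hπe v] at h1
      have h2 : Φ v - hsup i v < δ := hiU.2
      linarith
    have ha_mem : a ∈ Set.Icc (0 : ℝ) M :=
      ⟨by rw [ha]; exact Real.rpow_nonneg (hf0 _ hxs) α, hM v hvK'⟩
    have hb_mem : b ∈ Set.Icc (0 : ℝ) M := ⟨hg0 _, le_trans hb_le ha_mem.2⟩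
    have hd1 : dist a b < δ := by
      rw [Real.dist_eq, abs_of_nonneg (sub_nonneg.2 hb_le)]
      linarith
    have hd2 := hδ a ha_mem b hb_mem hd1
    have hfa : f (e v) = ψ a := by
      show f (e v) = (f (e v) ^ α) ^ (1 / α)
      exact (hrpow_inv (e v) hxs).symm
    rw [hfa]
    rw [Real.dist_eq] at hd2
    exact le_of_lt hd2
  -- integrability
  have hψg_cont : Continuous fun x => ψ (g x) := hψcont.comp (continuous_finsetSup' H hne)
  have hψg_int : IntegrableOn (fun x => ψ (g x)) s μ := by
    apply Integrable.mono' hint.abs hψg_cont.aestronglyMeasurable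
    rw [ae_restrict_iff' hsmeas]
    exact Filter.Eventually.of_forall fun x hx => by
      rw [Real.norm_eq_abs, abs_of_nonneg (hψg0 x)]
      exact le_trans (hψgle x hx) (le_abs_self _)
  have hdiff_int : IntegrableOn (fun x => |f x - ψ (g x)|) s μ := (hint.sub hψg_int).abs
  refine ⟨H, hne, fun _ x _ => hg0 x, ?_⟩
  show (∫ x in s, |f x - ψ (g x)| ∂μ) < ε
  have hsplit : ∫ x in s, |f x - ψ (g x)| ∂μ
      = (∫ x in K, |f x - ψ (g x)| ∂μ) + ∫ x in s \ K, |f x - ψ (g x)| ∂μ := by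
    rw [← setIntegral_union disjoint_sdiff_self_right (hsmeas.diff hKmeas)
      (hdiff_int.mono_set hKs) (hdiff_int.mono_set Set.diff_subset),
      Set.union_diff_cancel hKs]
  have hIK : ∫ x in K, |f x - ψ (g x)| ∂μ ≤ ε'' * (μ K).toReal := by
    have h1 := setIntegral_mono_on (hdiff_int.mono_set hKs)
      (integrableOn_const hμK.ne) hKmeas hclose
    rwa [setIntegral_const, smul_eq_mul, mul_comm] at h1
  have hIK' : ε'' * (μ K).toReal < ε / 2 := by
    rw [hε''_def, div_mul_eq_mul_div, div_lt_iff₀ (by positivity)]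
    nlinarith [ENNReal.toReal_nonneg (a := μ K), half_pos hε]
  have hItail : ∫ x in s \ K, |f x - ψ (g x)| ∂μ ≤ ∫ x in s \ K, f x ∂μ := by
    apply setIntegral_mono_on (hdiff_int.mono_set Set.diff_subset)
      (hint.mono_set Set.diff_subset) (hsmeas.diff hKmeas)
    intro x hx
    have hxs : x ∈ s := hx.1
    rw [abs_of_nonneg (sub_nonneg.2 (hψgle x hxs))]
    linarith [hψg0 x]
  calc ∫ x in s, |f x - ψ (g x)| ∂μ
      = (∫ x in K, |f x - ψ (g x)| ∂μ) + ∫ x in s \ K, |f x - ψ (g x)| ∂μ := hsplit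
    _ < ε / 2 + ε / 2 :=
        add_lt_add_of_le_of_lt (le_trans hIK (le_of_lt hIK'))
          (lt_of_le_of_lt hItail htail)
    _ = ε := add_halves ε
end
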